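/- arXiv:1907.04172 — 6 statements merged into one kernel-verified Lean document; each statement's English description precedes it below -/
import Mathlib

section
/- Let w ≥ 0 be an integer. In the formal power series ring ℤ[q][[t]], the generating function of tangent-type path diagrams bounded in a slit of width w equals the finite continued fraction G_w(t,q): that is, Σ_{N=0}^∞ t^{2N} · Σ_u Σ_s q^{weight(s)} = G_w(t,q), where the middle sum runs over all Dyck paths u of half-length N with height at most w and the inner sum runs over all tangent-type path diagrams s on u. -/
/-!
STATEMENT 0: the generating function of tangent-type path diagrams bounded in a
slit of width `w` equals the finite continued fraction `G_w(t,q)` in `ℤ[q][[t]]`.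
-/

open Finset

/-- The `q`-integer `[n]_q = 1 + q + ⋯ + q^{n-1}` in `ℤ[q]`. -/
noncomputable def qInt (n : ℕ) : Polynomial ℤ := ∑ i ∈ Finset.range n, Polynomial.X ^ i

/-- A step, encoded by a Boolean: `true` is a `+1` (northeast) step, `false` a `-1`
(southeast) step. -/
def stepVal (b : Bool) : ℤ := if b then 1 else -1

/-- The partial sum `u_1 + ⋯ + u_j` of the first `j` steps; `psum u j` is the
starting height of step `j+1`. -/
def psum {n : ℕ} (u : Fin n → Bool) (j : ℕ) : ℤ :=
  ∑ i ∈ Finset.univ.filter (fun i : Fin n => (i : ℕ) < j), stepVal (u i)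

/-- `u` is a Dyck path of half-length `N` whose height is at most `w`:
all partial sums are nonnegative, the total sum is `0`, and all partial sums are `≤ w`. -/
def IsDyckLe (N w : ℕ) (u : Fin (2 * N) → Bool) : Prop :=
  (∀ j ≤ 2 * N, 0 ≤ psum u j) ∧ psum u (2 * N) = 0 ∧ (∀ j ≤ 2 * N, psum u j ≤ (w : ℤ))

/-- `s` is a tangent-type path diagram on the Dyck path `u`: `0 ≤ s_j ≤ h_j` for every
step `j` (the upper bound `2N` on the codomain of `s` is harmless since `h_j ≤ 2N`). -/
def IsTangentDiagram {N : ℕ} (u : Fin (2 * N) → Bool) (s : Fin (2 * N) → Fin (2 * N + 1)) :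
    Prop :=
  ∀ j : Fin (2 * N), ((s j : ℕ) : ℤ) ≤ psum u (j : ℕ)

open scoped Classical in
/-- The generating function `Σ_N t^{2N} Σ_u Σ_s q^{weight(s)} ∈ ℤ[q][[t]]`, where `u` runs
over Dyck paths of half-length `N` of height at most `w` and `s` over tangent-type path
diagrams on `u`. -/
noncomputable def tangentGF (w : ℕ) : PowerSeries (Polynomial ℤ) :=
  PowerSeries.mk fun n =>
    if n % 2 = 0 then
      ∑ p ∈ Finset.univ.filter
          (fun p : (Fin (2 * (n / 2)) → Bool) × (Fin (2 * (n / 2)) → Fin (2 * (n / 2) + 1)) =>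
            IsDyckLe (n / 2) w p.1 ∧ IsTangentDiagram p.1 p.2),
        Polynomial.X ^ (∑ j, (p.2 j : ℕ))
    else 0

/-- `hAux w k` is the continued-fraction level `h_{w+1-k}`:
`h_{w+1} = 1` and `h_j = 1 - [j]_q [j+1]_q t² / h_{j+1}` for `1 ≤ j ≤ w`. -/
noncomputable def hAux (w : ℕ) : ℕ → PowerSeries (Polynomial ℤ)
  | 0 => 1
  | k + 1 => 1 - PowerSeries.C (qInt (w - k) * qInt (w - k + 1)) *
      PowerSeries.X ^ 2 * Ring.inverse (hAux w k)

/-- The finite continued fraction `G_w(t,q) = 1 / h_1 ∈ ℤ[q][[t]]`. -/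
noncomputable def Gcf (w : ℕ) : PowerSeries (Polynomial ℤ) := Ring.inverse (hAux w w)


lemma psum_zero {n : ℕ} (u : Fin n → Bool) : psum u 0 = 0 := by
  simp [psum]

lemma psum_eq_sum_ite {n : ℕ} (u : Fin n → Bool) (j : ℕ) :
    psum u j = ∑ i : Fin n, if (i : ℕ) < j then stepVal (u i) else 0 := by
  rw [psum, Finset.sum_filter]

lemma psum_succ {n : ℕ} (u : Fin n → Bool) (j : ℕ) :
    psum u (j + 1) = psum u j + (if h : j < n then stepVal (u ⟨j, h⟩) else 0) := by
  rw [psum_eq_sum_ite, psum_eq_sum_ite]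
  have : ∀ i : Fin n, (if (i : ℕ) < j + 1 then stepVal (u i) else 0)
      = (if (i : ℕ) < j then stepVal (u i) else 0) + (if (i : ℕ) = j then stepVal (u i) else 0) := by
    intro i
    rcases lt_trichotomy (i : ℕ) j with h | h | h <;> simp [h, Nat.lt_succ_iff_lt_or_eq] <;> omega
  rw [Finset.sum_congr rfl (fun i _ => this i), Finset.sum_add_distrib]
  congr 1
  by_cases h : j < n
  · rw [Finset.sum_eq_single (⟨j, h⟩ : Fin n), if_pos rfl, dif_pos h] <;>
      simp +contextual [Fin.ext_iff]
  · rw [dif_neg h, Finset.sum_eq_zero]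
    intro i _
    have := i.isLt
    have : (i : ℕ) ≠ j := by omega
    simp [this]

lemma psum_le {n : ℕ} (u : Fin n → Bool) (j : ℕ) : psum u j ≤ n := by
  calc psum u j ≤ ∑ _i ∈ Finset.univ.filter (fun i : Fin n => (i : ℕ) < j), (1 : ℤ) := by
        apply Finset.sum_le_sum
        intro i _
        rcases u i with _ | _ <;> simp [stepVal]
    _ ≤ ∑ _i : Fin n, (1 : ℤ) := by
        exact Finset.sum_le_sum_of_subset_of_nonneg (Finset.filter_subset _ _) (fun _ _ _ => zero_le_one)
    _ = n := by simp

lemma psum_snoc {n : ℕ} (v : Fin n → Bool) (b : Bool) :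
    ∀ j ≤ n, psum (Fin.snoc v b : Fin (n+1) → Bool) j = psum v j := by
  intro j hj
  induction j with
  | zero => simp [psum_zero]
  | succ j ih =>
    rw [psum_succ, psum_succ, ih (by omega)]
    have hjn : j < n := by omega
    have hjn1 : j < n + 1 := by omega
    rw [dif_pos hjn, dif_pos hjn1]
    congr 2
    have : (⟨j, hjn1⟩ : Fin (n+1)) = Fin.castSucc ⟨j, hjn⟩ := rfl
    rw [this, Fin.snoc_castSucc]

lemma psum_snoc_top {n : ℕ} (v : Fin n → Bool) (b : Bool) :
    psum (Fin.snoc v b : Fin (n+1) → Bool) (n + 1) = psum v n + stepVal b := by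
  rw [psum_succ, psum_snoc v b n le_rfl, dif_pos (Nat.lt_succ_self n)]
  congr 1
  have : (⟨n, Nat.lt_succ_self n⟩ : Fin (n+1)) = Fin.last n := rfl
  rw [this, Fin.snoc_last]

lemma psum_ne_zero_of_odd {n : ℕ} (u : Fin n → Bool) (hn : ¬ n % 2 = 0) :
    psum u n ≠ 0 := by
  intro h0
  have : ((psum u n : ℤ) : ZMod 2) = (n : ZMod 2) := by
    rw [psum, Finset.filter_true_of_mem (fun i _ => i.isLt)]
    push_cast
    rw [Finset.sum_congr rfl (fun i _ => show ((stepVal (u i) : ZMod 2)) = 1 by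
      rcases u i with _ | _ <;> simp [stepVal] <;> decide)]
    simp [mul_comm]
  rw [h0] at this
  have := (ZMod.natCast_eq_zero_iff n 2).mp this.symm
  omega

open scoped Classical

noncomputable def Mw (w : ℕ) (k k' : Fin (w+1)) : Polynomial ℤ :=
  if ((k:ℕ)+1 = (k':ℕ) ∨ (k':ℕ)+1 = (k:ℕ)) then qInt ((k:ℕ)+1) else 0

def Valid (w n : ℕ) (u : Fin n → Bool) : Prop :=
  ∀ j ≤ n, 0 ≤ psum u j ∧ psum u j ≤ (w:ℤ)

noncomputable def Wt {n : ℕ} (u : Fin n → Bool) : Polynomial ℤ :=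
  ∏ j : Fin n, qInt ((psum u (j:ℕ)).toNat + 1)

noncomputable def A (w n : ℕ) (k : Fin (w+1)) : Polynomial ℤ :=
  ∑ u ∈ Finset.univ.filter
      (fun u : Fin n → Bool => Valid w n u ∧ psum u n = ((k:ℕ):ℤ)), Wt u

lemma A_zero (w : ℕ) (k : Fin (w+1)) : A w 0 k = if k = 0 then 1 else 0 := by
  rw [A]
  have hW : ∀ u : Fin 0 → Bool, Wt u = 1 := by intro u; simp [Wt]
  split_ifs with hk
  · rw [Finset.filter_true_of_mem, Finset.sum_congr rfl (fun u _ => hW u)]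
    · simp
    · intro u _
      refine ⟨fun j hj => ?_, by simp [psum_zero, hk]⟩
      interval_cases j
      simp [psum_zero]
  · rw [Finset.filter_false_of_mem, Finset.sum_empty]
    rintro u _ ⟨-, h⟩
    rw [psum_zero] at h
    have hk0 : (k:ℕ) = 0 := by exact_mod_cast h.symm
    exact hk (Fin.ext (by simp [hk0]))

lemma Wt_snoc {n : ℕ} (v : Fin n → Bool) (b : Bool) :
    Wt (Fin.snoc v b : Fin (n+1) → Bool) = Wt v * qInt ((psum v n).toNat + 1) := by
  rw [Wt, Fin.prod_univ_castSucc]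
  simp only [Fin.coe_castSucc, Fin.val_last]
  congr 1
  · exact Finset.prod_congr rfl fun i _ => by rw [psum_snoc v b i (le_of_lt i.isLt)]
  · rw [psum_snoc v b n le_rfl]

lemma valid_snoc_iff (w n : ℕ) (k : Fin (w+1)) (v : Fin n → Bool) (b : Bool) :
    (Valid w (n+1) (Fin.snoc v b) ∧ psum (Fin.snoc v b : Fin (n+1) → Bool) (n+1) = ((k:ℕ):ℤ))
      ↔ (Valid w n v ∧ psum v n + stepVal b = ((k:ℕ):ℤ)) := by
  constructor
  · rintro ⟨hval, hend⟩
    refine ⟨fun j hj => ?_, ?_⟩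
    · rw [← psum_snoc v b j hj]; exact hval j (by omega)
    · rw [← psum_snoc_top v b]; exact hend
  · rintro ⟨hval, hend⟩
    refine ⟨fun j hj => ?_, ?_⟩
    · rcases Nat.lt_succ_iff_lt_or_eq.mp (Nat.lt_succ_of_le hj) with h | h
      · rw [psum_snoc v b j (by omega)]; exact hval j (by omega)
      · subst h
        rw [psum_snoc_top v b, hend]
        have hkw := k.isLt
        constructor
        · positivity
        · have : (k:ℕ) ≤ w := by omega
          exact_mod_cast this
    · rw [psum_snoc_top v b]; exact hend

lemma A_succ (w n : ℕ) (k : Fin (w+1)) :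
    A w (n+1) k = ∑ k' : Fin (w+1), A w n k' * Mw w k' k := by
  rw [A, Finset.sum_filter,
    ← Equiv.sum_comp (Fin.snocEquiv (fun _ => Bool))
      (fun u : Fin (n+1) → Bool =>
        if Valid w (n+1) u ∧ psum u (n+1) = ((k:ℕ):ℤ) then Wt u else 0),
    Fintype.sum_prod_type]
  rw [Finset.sum_comm]
  have hRHS : ∀ k' : Fin (w+1), A w n k' * Mw w k' k
      = ∑ v : Fin n → Bool,
          if Valid w n v ∧ psum v n = ((k':ℕ):ℤ) then Wt v * Mw w k' k else 0 := by
    intro k'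
    rw [A, Finset.sum_filter, Finset.sum_mul]
    exact Finset.sum_congr rfl (fun v _ => by split_ifs <;> simp
      )
  conv_rhs => rw [Finset.sum_congr rfl (fun k' _ => hRHS k'), Finset.sum_comm]
  apply Finset.sum_congr rfl
  intro v _
  have he : ∀ b : Bool, (Fin.snocEquiv (fun _ => Bool)) (b, v) = Fin.snoc v b := by
    intro b; rfl
  by_cases hv : Valid w n v
  · have h0 : 0 ≤ psum v n := (hv n le_rfl).1
    have hwle : psum v n ≤ (w:ℤ) := (hv n le_rfl).2
    set m : ℕ := (psum v n).toNat with hm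
    have hpm : psum v n = (m:ℤ) := (Int.toNat_of_nonneg h0).symm
    have hmw : m ≤ w := by omega
    have hk0 : Fin (w+1) := ⟨m, Nat.lt_succ_of_le hmw⟩
    trans (Wt v * Mw w ⟨m, Nat.lt_succ_of_le hmw⟩ k)
    · -- Bool sum
      rw [Fintype.sum_bool]
      have hcond : ∀ b : Bool,
          (Valid w (n+1) (Fin.snoc v b) ∧
            psum (Fin.snoc v b : Fin (n+1) → Bool) (n+1) = ((k:ℕ):ℤ))
          ↔ ((m:ℤ) + stepVal b = ((k:ℕ):ℤ)) := by
        intro b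
        rw [valid_snoc_iff, hpm]
        simp [hv]
      have hst : stepVal true = 1 := rfl
      have hsf : stepVal false = -1 := rfl
      simp only [he, hcond, Wt_snoc, hst, hsf, ← hpm, ← hm]
      rw [Mw]
      have hval : ((⟨m, Nat.lt_succ_of_le hmw⟩ : Fin (w+1)) : ℕ) = m := rfl
      simp only [hval, hpm]
      have hkk := k.isLt
      split_ifs <;> first | ring1 | (exfalso; omega)
    · -- k' sum
      rw [Finset.sum_eq_single (⟨m, Nat.lt_succ_of_le hmw⟩ : Fin (w+1))]
      · rw [if_pos ⟨hv, hpm⟩]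
      · intro k' _ hne
        rw [if_neg]
        rintro ⟨-, hp⟩
        rw [hpm] at hp
        exact hne (Fin.ext (show (k':ℕ) = m by omega))
      · intro h
        exact absurd (Finset.mem_univ _) h

  · have : ∀ b : Bool, ¬ (Valid w (n+1) (Fin.snoc v b) ∧
        psum (Fin.snoc v b : Fin (n+1) → Bool) (n+1) = ((k:ℕ):ℤ)) := by
      intro b hc
      exact hv ((valid_snoc_iff w n k v b).mp hc).1
    rw [Fintype.sum_bool]
    simp only [he, if_neg (this true), if_neg (this false), hv, false_and, if_false,
      Finset.sum_const_zero, add_zero]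

open PowerSeries

lemma constantCoeff_hAux (w k : ℕ) : constantCoeff (hAux w k) = 1 := by
  cases k with
  | zero => simp [hAux]
  | succ k => simp [hAux, pow_two]

lemma isUnit_hAux (w k : ℕ) : IsUnit (hAux w k) := by
  rw [PowerSeries.isUnit_iff_constantCoeff, constantCoeff_hAux]
  exact isUnit_one

noncomputable def Ew (w k : ℕ) : PowerSeries (Polynomial ℤ) := Ring.inverse (hAux w (w - k))

lemma Ew_top (w : ℕ) : Ew w w = 1 := by
  rw [Ew, Nat.sub_self]
  show Ring.inverse (hAux w 0) = 1
  rw [show hAux w 0 = 1 from rfl, Ring.inverse_one]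

lemma Ew_identity (w k : ℕ) (h : k < w) :
    Ew w k = 1 + PowerSeries.C (qInt (k+1) * qInt (k+2)) *
      PowerSeries.X ^ 2 * Ew w (k+1) * Ew w k := by
  have h1 : w - k = (w - k - 1) + 1 := by omega
  have h2 : w - (w - k - 1) = k + 1 := by omega
  have h3 : w - (k + 1) = w - k - 1 := by omega
  have hA : hAux w (w - k)
      = 1 - PowerSeries.C (qInt (k+1) * qInt (k+2)) * PowerSeries.X ^ 2
          * Ew w (k+1) := by
    rw [h1]
    show 1 - PowerSeries.C (qInt (w - (w-k-1)) * qInt (w - (w-k-1) + 1)) *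
        PowerSeries.X ^ 2 * Ring.inverse (hAux w (w-k-1)) = _
    rw [h2]
    unfold Ew
    rw [h3]
  have hmul : hAux w (w - k) * Ew w k = 1 := Ring.mul_inverse_cancel _ (isUnit_hAux w _)
  rw [hA, sub_mul, one_mul] at hmul
  linear_combination hmul

noncomputable def aaP (k : ℕ) : Polynomial ℤ := ∏ i ∈ Finset.range k, qInt (i+1)

noncomputable def uVn (w m : ℕ) : PowerSeries (Polynomial ℤ) :=
  PowerSeries.X ^ m * PowerSeries.C (aaP m) * ∏ i ∈ Finset.range (m+1), Ew w i

lemma uVn_zero (w : ℕ) : uVn w 0 = Ew w 0 := by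
  simp [uVn, aaP]

lemma uVn_mid (w m : ℕ) (h : m + 1 < w) :
    uVn w (m+1) = PowerSeries.X * (PowerSeries.C (qInt (m+1)) * uVn w m
      + PowerSeries.C (qInt (m+3)) * uVn w (m+2)) := by
  have e1 : aaP (m+1) = aaP m * qInt (m+1) := Finset.prod_range_succ _ _
  have e2 : aaP (m+2) = aaP m * qInt (m+1) * qInt (m+2) := by
    rw [show aaP (m+2) = aaP (m+1) * qInt (m+2) from Finset.prod_range_succ _ _, e1]
  have e3 : (∏ i ∈ Finset.range (m+2+1), Ew w i)
      = (∏ i ∈ Finset.range (m+1), Ew w i) * Ew w (m+1) * Ew w (m+2) := by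
    rw [show (∏ i ∈ Finset.range (m+2+1), Ew w i)
        = (∏ i ∈ Finset.range (m+2), Ew w i) * Ew w (m+2) from Finset.prod_range_succ _ _,
      show (∏ i ∈ Finset.range (m+1+1), Ew w i)
        = (∏ i ∈ Finset.range (m+1), Ew w i) * Ew w (m+1) from Finset.prod_range_succ _ _]
  have e4 : qInt (m+1+1) = qInt (m+2) := rfl
  have e5 : qInt (m+1+2) = qInt (m+3) := rfl
  rw [uVn, uVn, uVn, e1, e2, e3, e4, e5,
    Finset.prod_range_succ (fun i => Ew w i) (m+1)]
  conv_lhs => rw [Ew_identity w (m+1) h]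
  simp only [map_mul]
  ring1

lemma uVn_bot (w : ℕ) (h : 0 < w) :
    uVn w 0 = 1 + PowerSeries.X *
      (PowerSeries.C (qInt 2) * uVn w 1) := by
  conv_lhs => rw [uVn_zero, Ew_identity w 0 h]
  rw [uVn, show (0:ℕ)+1 = 1 from rfl]
  have e1 : aaP 1 = qInt 1 := by simp [aaP]
  have e3 : (∏ i ∈ Finset.range 2, Ew w i) = Ew w 0 * Ew w 1 := by
    rw [show (2:ℕ) = 1+1 from rfl, Finset.prod_range_succ, Finset.prod_range_one]
  have hq1 : qInt 1 = 1 := by simp [qInt]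
  rw [e1, e3, hq1]
  simp only [map_mul, map_one]
  ring1

lemma uVn_top (w m : ℕ) (h : m + 1 = w) :
    uVn w (m+1) = PowerSeries.X * (PowerSeries.C (qInt (m+1)) * uVn w m) := by
  have e1 : aaP (m+1) = aaP m * qInt (m+1) := Finset.prod_range_succ _ _
  have e3 : (∏ i ∈ Finset.range (m+1+1), Ew w i)
      = (∏ i ∈ Finset.range (m+1), Ew w i) * Ew w (m+1) := Finset.prod_range_succ _ _
  rw [uVn, uVn, e1, e3, show Ew w (m+1) = 1 from h ▸ Ew_top w]
  simp only [map_mul, mul_one]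
  ring1

lemma uVn_triv (w : ℕ) (h : w = 0) : uVn w 0 = 1 := by
  subst h
  rw [uVn_zero, Ew, Nat.sub_self]
  show Ring.inverse (hAux 0 0) = 1
  rw [show hAux 0 0 = 1 from rfl, Ring.inverse_one]

open scoped Classical

noncomputable def uV (w : ℕ) (k : Fin (w+1)) : PowerSeries (Polynomial ℤ) := uVn w (k:ℕ)

lemma sum_eq_of_val (w c : ℕ) (f : Fin (w+1) → PowerSeries (Polynomial ℤ)) :
    (∑ k' : Fin (w+1), if (k':ℕ) = c then f k' else 0)
      = if h : c ≤ w then f ⟨c, Nat.lt_succ_of_le h⟩ else 0 := by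
  split_ifs with h
  · rw [Finset.sum_eq_single (⟨c, Nat.lt_succ_of_le h⟩ : Fin (w+1))]
    · rw [if_pos rfl]
    · intro b _ hb
      rw [if_neg]
      intro hc
      exact hb (Fin.ext hc)
    · intro hmem
      exact absurd (Finset.mem_univ _) hmem
  · apply Finset.sum_eq_zero
    intro b _
    rw [if_neg]
    have := b.isLt
    omega

lemma uV_rec (w : ℕ) (k : Fin (w+1)) :
    uV w k = (if k = 0 then 1 else 0)
      + PowerSeries.X * ∑ k' : Fin (w+1),
          PowerSeries.C (Mw w k' k) * uV w k' := by
  have hsplit : ∀ k' : Fin (w+1),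
      PowerSeries.C (Mw w k' k) * uV w k'
        = (if (k':ℕ) = (k:ℕ) - 1 ∧ 1 ≤ (k:ℕ) then
            PowerSeries.C (qInt (k:ℕ)) * uV w k' else 0)
          + (if (k':ℕ) = (k:ℕ) + 1 then
            PowerSeries.C (qInt ((k:ℕ)+2)) * uV w k' else 0) := by
    intro k'
    rw [Mw]
    split_ifs with h1 h2 h3 <;>
      first
        | (rw [show (k':ℕ)+1 = (k:ℕ) from by omega]; ring1)
        | (rw [show (k':ℕ)+1 = (k:ℕ)+2 from by omega]; ring1)
        | (exfalso; omega)
        | simp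
  rw [Finset.sum_congr rfl (fun k' _ => hsplit k'), Finset.sum_add_distrib]
  by_cases hk1 : 1 ≤ (k:ℕ)
  · -- k ≥ 1
    have hkne : ¬ (k = 0) := by
      intro h; rw [h] at hk1; simp at hk1
    rw [if_neg hkne]
    have hc1 : (∑ k' : Fin (w+1), if (k':ℕ) = (k:ℕ) - 1 ∧ 1 ≤ (k:ℕ) then
        PowerSeries.C (qInt (k:ℕ)) * uV w k' else 0)
        = ∑ k' : Fin (w+1), if (k':ℕ) = (k:ℕ) - 1 then
            PowerSeries.C (qInt (k:ℕ)) * uV w k' else 0 := by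
      apply Finset.sum_congr rfl
      intro k' _
      simp [hk1]
    rw [hc1, sum_eq_of_val, sum_eq_of_val]
    have hkw : (k:ℕ) ≤ w := by have := k.isLt; omega
    rw [dif_pos (show (k:ℕ) - 1 ≤ w by omega)]
    obtain ⟨m, hm⟩ : ∃ m, (k:ℕ) = m + 1 := ⟨(k:ℕ) - 1, by omega⟩
    have huv : uV w k = uVn w (m+1) := by rw [uV, hm]
    have huv1 : uV w ⟨(k:ℕ) - 1, Nat.lt_succ_of_le (by omega)⟩ = uVn w m := by
      rw [uV]
      congr 1
      simp [hm]
    by_cases hkw2 : (k:ℕ) + 1 ≤ w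
    · rw [dif_pos hkw2]
      have huv2 : uV w ⟨(k:ℕ) + 1, Nat.lt_succ_of_le hkw2⟩ = uVn w (m+2) := by
        rw [uV]
        show uVn w ((k:ℕ)+1) = uVn w (m+2)
        rw [hm]
      rw [huv, huv1, huv2, zero_add, hm,
        show m+1+2 = m+3 from rfl]
      exact uVn_mid w m (by omega)
    · rw [dif_neg hkw2, huv, huv1, zero_add, hm, add_zero]
      exact uVn_top w m (by omega)
  · -- k = 0
    have hk0 : (k:ℕ) = 0 := by omega
    have hkeq : k = 0 := Fin.ext (by simp [hk0])
    rw [if_pos hkeq]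
    have hc1 : (∑ k' : Fin (w+1), if (k':ℕ) = (k:ℕ) - 1 ∧ 1 ≤ (k:ℕ) then
        PowerSeries.C (qInt (k:ℕ)) * uV w k' else 0) = 0 := by
      apply Finset.sum_eq_zero
      intro k' _
      rw [if_neg]
      omega
    rw [hc1, zero_add, sum_eq_of_val, hk0]
    by_cases hw : 0 + 1 ≤ w
    · rw [dif_pos hw]
      have huv1 : uV w ⟨0+1, Nat.lt_succ_of_le hw⟩ = uVn w 1 := rfl
      have huv0 : uV w k = uVn w 0 := by rw [uV, hk0]
      rw [huv1, huv0, show (0:ℕ)+2 = 2 from rfl]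
      exact uVn_bot w (by omega)
    · rw [dif_neg hw]
      have huv0 : uV w k = uVn w 0 := by rw [uV, hk0]
      rw [huv0, uVn_triv w (by omega), mul_zero, add_zero]

noncomputable def gA (w : ℕ) (k : Fin (w+1)) : PowerSeries (Polynomial ℤ) :=
  PowerSeries.mk fun n => A w n k

lemma gA_rec (w : ℕ) (k : Fin (w+1)) :
    gA w k = (if k = 0 then 1 else 0)
      + PowerSeries.X * ∑ k' : Fin (w+1),
          PowerSeries.C (Mw w k' k) * gA w k' := by
  ext n : 1
  rw [gA, PowerSeries.coeff_mk, map_add]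
  cases n with
  | zero =>
    rw [A_zero]
    have h2 : (PowerSeries.coeff 0) (PowerSeries.X * ∑ k' : Fin (w+1),
        PowerSeries.C (Mw w k' k) * gA w k') = 0 := by
      rw [PowerSeries.coeff_zero_eq_constantCoeff, map_mul]
      simp
    rw [h2, add_zero]
    split_ifs <;> simp
  | succ n =>
    rw [A_succ]
    have h1 : (PowerSeries.coeff (n+1))
        ((if k = 0 then 1 else 0) : PowerSeries (Polynomial ℤ)) = 0 := by
      split_ifs <;> simp [PowerSeries.coeff_one]
    rw [h1, zero_add, PowerSeries.coeff_succ_X_mul, map_sum]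
    apply Finset.sum_congr rfl
    intro k' _
    rw [PowerSeries.coeff_C_mul, gA, PowerSeries.coeff_mk, mul_comm]

lemma rec_unique (w : ℕ) (f g : Fin (w+1) → PowerSeries (Polynomial ℤ))
    (hf : ∀ k, f k = (if k = 0 then 1 else 0)
      + PowerSeries.X * ∑ k' : Fin (w+1), PowerSeries.C (Mw w k' k) * f k')
    (hg : ∀ k, g k = (if k = 0 then 1 else 0)
      + PowerSeries.X * ∑ k' : Fin (w+1), PowerSeries.C (Mw w k' k) * g k') :
    f = g := by
  have key : ∀ n (k : Fin (w+1)),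
      PowerSeries.coeff n (f k) = PowerSeries.coeff n (g k) := by
    intro n
    induction n with
    | zero =>
      intro k
      rw [congrArg (PowerSeries.coeff 0) (hf k),
        congrArg (PowerSeries.coeff 0) (hg k), map_add, map_add]
      rw [add_right_inj]
      rw [PowerSeries.coeff_zero_eq_constantCoeff, map_mul, map_mul]
      simp
    | succ n ih =>
      intro k
      rw [congrArg (PowerSeries.coeff (n+1)) (hf k),
        congrArg (PowerSeries.coeff (n+1)) (hg k), map_add, map_add,
        PowerSeries.coeff_succ_X_mul, PowerSeries.coeff_succ_X_mul, map_sum, map_sum]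
      rw [add_right_inj]
      apply Finset.sum_congr rfl
      intro k' _
      rw [PowerSeries.coeff_C_mul, PowerSeries.coeff_C_mul, ih k']
  funext k
  ext n : 1
  exact key n k

lemma gA_eq_uV (w : ℕ) : gA w = uV w :=
  rec_unique w (gA w) (uV w) (gA_rec w) (uV_rec w)

open scoped Classical in
open scoped Classical

lemma A_odd (w n : ℕ) (hn : ¬ n % 2 = 0) : A w n 0 = 0 := by
  apply Finset.sum_eq_zero
  intro u hu
  rw [Finset.mem_filter] at hu
  exact absurd (by simpa using hu.2.2) (psum_ne_zero_of_odd u hn)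

lemma isDyckLe_iff (w N : ℕ) (u : Fin (2*N) → Bool) :
    IsDyckLe N w u ↔ (Valid w (2*N) u ∧ psum u (2*N) = (((0:Fin (w+1)):ℕ):ℤ)) := by
  constructor
  · rintro ⟨h1, h2, h3⟩
    exact ⟨fun j hj => ⟨h1 j hj, h3 j hj⟩, by simp [h2]⟩
  · rintro ⟨h1, h2⟩
    exact ⟨fun j hj => (h1 j hj).1, by simpa using h2, fun j hj => (h1 j hj).2⟩

lemma innerSumTD (N : ℕ) (u : Fin (2*N) → Bool) (h0 : ∀ j ≤ 2*N, 0 ≤ psum u j) :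
    (∑ s : Fin (2*N) → Fin (2*N+1),
      if IsTangentDiagram u s then (Polynomial.X : Polynomial ℤ) ^ (∑ j, (s j : ℕ)) else 0)
      = Wt u := by
  rw [← Finset.sum_filter]
  have hset : Finset.univ.filter (fun s : Fin (2*N) → Fin (2*N+1) => IsTangentDiagram u s)
      = Fintype.piFinset (fun j : Fin (2*N) =>
          Finset.univ.filter (fun x : Fin (2*N+1) => ((x:ℕ):ℤ) ≤ psum u (j:ℕ))) := by
    ext s
    rw [Finset.mem_filter, Fintype.mem_piFinset]
    simp [IsTangentDiagram]
  rw [hset]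
  have hpw : ∀ s : Fin (2*N) → Fin (2*N+1),
      (Polynomial.X : Polynomial ℤ) ^ (∑ j, (s j : ℕ)) = ∏ j, (Polynomial.X : Polynomial ℤ) ^ ((s j : ℕ)) := by
    intro s
    rw [Finset.prod_pow_eq_pow_sum]
  rw [Finset.sum_congr rfl (fun s _ => hpw s),
    ← Finset.prod_univ_sum
      (fun j : Fin (2*N) =>
        Finset.univ.filter (fun x : Fin (2*N+1) => ((x:ℕ):ℤ) ≤ psum u (j:ℕ)))
      (fun j (y : Fin (2*N+1)) => (Polynomial.X : Polynomial ℤ) ^ (y:ℕ))]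
  rw [Wt]
  apply Finset.prod_congr rfl
  intro j _
  -- ∑ x ∈ filter, X^(x:ℕ) = qInt ((psum u j).toNat + 1)
  have h0j : 0 ≤ psum u (j:ℕ) := h0 j (le_of_lt j.isLt)
  have hle : (psum u (j:ℕ)).toNat + 1 ≤ 2*N + 1 := by
    have := psum_le u (j:ℕ)
    omega
  rw [Finset.sum_filter,
    Fin.sum_univ_eq_sum_range
      (fun i => if ((i:ℕ):ℤ) ≤ psum u (j:ℕ) then (Polynomial.X : Polynomial ℤ) ^ i else 0)
      (2*N+1)]
  have hc : ∀ i, (if ((i:ℕ):ℤ) ≤ psum u (j:ℕ) then (Polynomial.X : Polynomial ℤ) ^ i else 0)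
      = (if i ∈ Finset.range ((psum u (j:ℕ)).toNat + 1) then (Polynomial.X : Polynomial ℤ) ^ i else 0) := by
    intro i
    refine if_congr ?_ rfl rfl
    rw [Finset.mem_range]
    omega
  rw [Finset.sum_congr rfl (fun i _ => hc i), Finset.sum_ite_mem,
    show Finset.range (2*N+1) ∩ Finset.range ((psum u (j:ℕ)).toNat + 1)
      = Finset.range ((psum u (j:ℕ)).toNat + 1) from by ext x; simp [Finset.mem_range]; omega,
    qInt]

lemma tangent_sum_eq (w N : ℕ) :
    (∑ p ∈ Finset.univ.filter
        (fun p : (Fin (2*N) → Bool) × (Fin (2*N) → Fin (2*N+1)) =>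
          IsDyckLe N w p.1 ∧ IsTangentDiagram p.1 p.2),
      (Polynomial.X : Polynomial ℤ) ^ (∑ j, (p.2 j : ℕ))) = A w (2*N) 0 := by
  rw [Finset.sum_filter, Fintype.sum_prod_type, A, Finset.sum_filter]
  apply Finset.sum_congr rfl
  intro u _
  by_cases hu : IsDyckLe N w u
  · rw [if_pos ((isDyckLe_iff w N u).mp hu)]
    rw [Finset.sum_congr rfl (fun s _ => if_congr (and_iff_right hu) rfl rfl)]
    exact innerSumTD N u hu.1
  · rw [if_neg (fun hc => hu ((isDyckLe_iff w N u).mpr hc))]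
    apply Finset.sum_eq_zero
    intro s _
    rw [if_neg (fun hc => hu hc.1)]

lemma tangentGF_eq_A (w : ℕ) :
    tangentGF w = PowerSeries.mk (fun n => A w n 0) := by
  ext n : 1
  rw [tangentGF, PowerSeries.coeff_mk, PowerSeries.coeff_mk]
  split_ifs with h
  · have h2 : 2 * (n/2) = n := by omega
    rw [tangent_sum_eq w (n/2), h2]
  · exact (A_odd w n h).symm

/-- For every integer `w ≥ 0`, the generating function of tangent-type path diagrams in a
slit of width `w` equals the finite continued fraction `G_w(t,q)`. -/
theorem tangent_pathDiagrams_eq_continuedFraction (w : ℕ) :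
    tangentGF w = Gcf w := by
  rw [tangentGF_eq_A w]
  have h1 : PowerSeries.mk (fun n => A w n 0) = gA w 0 := rfl
  rw [h1, gA_eq_uV w]
  show uVn w ((0 : Fin (w+1)) : ℕ) = Gcf w
  rw [show ((0 : Fin (w+1)) : ℕ) = 0 from rfl, uVn_zero]
  show Ring.inverse (hAux w (w - 0)) = Gcf w
  rw [Nat.sub_zero]
  rfl
end

section
/- Let q, λ ∈ ℂ with |q| < 1, λ ≠ 0, 1 + λ² ≠ 0, and suppose λ²q^k ≠ 1 and λ² ≠ q^k for all integers k ≥ 1. Set α = λ/(1+λ²) and λ̄ = 1/λ, and let P_w, Q_w be given by the recurrences with this α. Let w ≥ 0 be an integer, and set A_w = λ̄^w φ(λ,q³) φ(λ̄,q^{w+3}) − λ^w φ(λ̄,q³) φ(λ,q^{w+3}) and D_w = (1+λ²)[λ̄^w φ(λ,q²) φ(λ̄,q^{w+3}) − λ^{w+2} φ(λ̄,q²) φ(λ,q^{w+3})]. If Q_w ≠ 0, D_w ≠ 0 and D_w ≠ λ²(1−q)A_w, then P_w/Q_w = 1 / (1 − λ²(1−q)A_w / D_w). -/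
/-!
STATEMENT 4 (Theorem 1, q-tangent case): the convergents `P_w / Q_w` of the continued
fraction are given explicitly in terms of the basic hypergeometric series `φ`.
-/

open Complex

/-- The `q`-Pochhammer symbol `(a;q)_k = ∏_{j=0}^{k-1} (1 - a q^j)`. -/
noncomputable def qPoch (a q : ℂ) (k : ℕ) : ℂ := ∏ j ∈ Finset.range k, (1 - a * q ^ j)

/-- `φ(λ,x) = Σ_k (-λ²;q²)_k x^k / ((q;q)_k (λ²q;q)_k) = ₂φ₁(iλ, -iλ; λ²q; q, x)`. -/
noncomputable def phi (q lam x : ℂ) : ℂ :=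
  ∑' k : ℕ, qPoch (-lam ^ 2) (q ^ 2) k * x ^ k / (qPoch q q k * qPoch (lam ^ 2 * q) q k)

/-- `Pseq α q (w+1) = P_w`: `P_{-1} = 0`, `P_0 = 1`, and
`P_w = P_{w-1} - α²(1-q^w)(1-q^{w+1}) P_{w-2}` for `w ≥ 1`. -/
noncomputable def Pseq (α q : ℂ) : ℕ → ℂ
  | 0 => 0
  | 1 => 1
  | n + 2 => Pseq α q (n + 1) - α ^ 2 * (1 - q ^ (n + 1)) * (1 - q ^ (n + 2)) * Pseq α q n

/-- `Qseq α q (w+1) = Q_w`: `Q_{-1} = 1`, `Q_0 = 1`, and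
`Q_w = Q_{w-1} - α²(1-q^w)(1-q^{w+1}) Q_{w-2}` for `w ≥ 1`. -/
noncomputable def Qseq (α q : ℂ) : ℕ → ℂ
  | 0 => 1
  | 1 => 1
  | n + 2 => Qseq α q (n + 1) - α ^ 2 * (1 - q ^ (n + 1)) * (1 - q ^ (n + 2)) * Qseq α q n

noncomputable def cc (q mu : ℂ) (k : ℕ) : ℂ :=
  qPoch (-mu ^ 2) (q ^ 2) k / (qPoch q q k * qPoch (mu ^ 2 * q) q k)

lemma qPoch_succ (a q : ℂ) (k : ℕ) :
    qPoch a q (k + 1) = qPoch a q k * (1 - a * q ^ k) := Finset.prod_range_succ _ _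

lemma one_sub_pow_ne {q : ℂ} (hq : ‖q‖ < 1) (k : ℕ) (hk : 1 ≤ k) :
    (1 : ℂ) - q ^ k ≠ 0 := by
  intro h
  have h1 : q ^ k = 1 := by linear_combination -h
  have : ‖q ^ k‖ < 1 := by
    rw [norm_pow]
    exact pow_lt_one₀ (norm_nonneg q) hq (by omega)
  rw [h1] at this; simp at this

lemma qPochQ_ne {q : ℂ} (hq : ‖q‖ < 1) (k : ℕ) : qPoch q q k ≠ 0 := by
  unfold qPoch
  refine Finset.prod_ne_zero_iff.2 fun j _ => ?_
  have := one_sub_pow_ne hq (j + 1) (by omega)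
  rwa [pow_succ'] at this

lemma qPochMu_ne {q mu : ℂ} (hmu : ∀ k : ℕ, 1 ≤ k → mu ^ 2 * q ^ k ≠ 1) (k : ℕ) :
    qPoch (mu ^ 2 * q) q k ≠ 0 := by
  unfold qPoch
  refine Finset.prod_ne_zero_iff.2 fun j _ => ?_
  intro h
  have h1 : mu ^ 2 * q ^ (j + 1) = 1 := by rw [pow_succ']; ring_nf; ring_nf at h; linear_combination -h
  exact hmu (j + 1) (by omega) h1

lemma phi_eq (q mu x : ℂ) : phi q mu x = ∑' k : ℕ, cc q mu k * x ^ k := by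
  unfold phi cc
  congr 1; funext k
  rw [div_mul_eq_mul_div]

lemma cc_rec {q mu : ℂ} (hq : ‖q‖ < 1)
    (hmu : ∀ k : ℕ, 1 ≤ k → mu ^ 2 * q ^ k ≠ 1) (k : ℕ) :
    cc q mu (k + 1) * ((1 - q ^ (k + 1)) * (1 - mu ^ 2 * q ^ (k + 1))) =
      cc q mu k * (1 + mu ^ 2 * q ^ (2 * k)) := by
  unfold cc
  rw [qPoch_succ, qPoch_succ, qPoch_succ]
  have h1 := qPochQ_ne hq k
  have h2 := qPochMu_ne hmu k
  have h3 : (1 : ℂ) - q * q ^ k ≠ 0 := by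
    have := one_sub_pow_ne hq (k + 1) (by omega); rwa [pow_succ'] at this
  have h4 : (1 : ℂ) - mu ^ 2 * q * q ^ k ≠ 0 := by
    intro h
    exact hmu (k + 1) (by omega) (by rw [pow_succ']; linear_combination -h)
  rw [pow_mul]
  field_simp
  ring

open Filter in
lemma summable_cc {q mu : ℂ} (hq : ‖q‖ < 1)
    (hmu : ∀ k : ℕ, 1 ≤ k → mu ^ 2 * q ^ k ≠ 1) {x : ℂ} (hx : ‖x‖ < 1) :
    Summable (fun k : ℕ => cc q mu k * x ^ k) := by
  set r : ℝ := (‖x‖ + 1) / 2 with hr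
  have hr1 : r < 1 := by rw [hr]; linarith
  have hxr : ‖x‖ < r := by rw [hr]; linarith
  refine summable_of_ratio_norm_eventually_le hr1 ?_
  -- the ratio function
  have hq1 : ‖q‖ < 1 := hq
  have hq2 : ‖q ^ 2‖ < 1 := by
    rw [norm_pow]; exact pow_lt_one₀ (norm_nonneg q) hq1 (by omega)
  have t1 : Tendsto (fun k : ℕ => (q ^ 2) ^ k) atTop (nhds 0) :=
    tendsto_pow_atTop_nhds_zero_of_norm_lt_one hq2
  have t2 : Tendsto (fun k : ℕ => q ^ (k + 1)) atTop (nhds 0) := by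
    have := (tendsto_pow_atTop_nhds_zero_of_norm_lt_one hq1).mul_const q
    simpa [pow_succ] using this
  have tnum : Tendsto (fun k : ℕ => ‖(1 : ℂ) + mu ^ 2 * (q ^ 2) ^ k‖) atTop (nhds 1) := by
    have : Tendsto (fun k : ℕ => (1 : ℂ) + mu ^ 2 * (q ^ 2) ^ k) atTop (nhds 1) := by
      have := (t1.const_mul (mu ^ 2)).const_add (1 : ℂ)
      simpa using this
    simpa using this.norm
  have tden1 : Tendsto (fun k : ℕ => ‖(1 : ℂ) - q ^ (k + 1)‖) atTop (nhds 1) := by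
    have : Tendsto (fun k : ℕ => (1 : ℂ) - q ^ (k + 1)) atTop (nhds 1) := by
      have : Tendsto (fun k : ℕ => (1 : ℂ) - q ^ (k + 1)) atTop (nhds (1 - 0)) :=
        Tendsto.sub tendsto_const_nhds t2
      simpa using this
    simpa using this.norm
  have tden2 : Tendsto (fun k : ℕ => ‖(1 : ℂ) - mu ^ 2 * q ^ (k + 1)‖) atTop (nhds 1) := by
    have : Tendsto (fun k : ℕ => (1 : ℂ) - mu ^ 2 * q ^ (k + 1)) atTop (nhds 1) := by
      have : Tendsto (fun k : ℕ => (1 : ℂ) - mu ^ 2 * q ^ (k + 1)) atTop (nhds (1 - mu ^ 2 * 0)) :=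
        Tendsto.sub tendsto_const_nhds (t2.const_mul (mu ^ 2))
      simpa using this
    simpa using this.norm
  have trat : Tendsto
      (fun k : ℕ => ‖x‖ * ‖(1 : ℂ) + mu ^ 2 * (q ^ 2) ^ k‖ /
        (‖(1 : ℂ) - q ^ (k + 1)‖ * ‖(1 : ℂ) - mu ^ 2 * q ^ (k + 1)‖)) atTop
      (nhds (‖x‖)) := by
    have := ((tnum.const_mul (‖x‖)).div (tden1.mul tden2) (by norm_num))
    simpa only [mul_one, div_one, Pi.div_def] using this
  filter_upwards [trat.eventually_lt_const hxr] with k hk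
  -- now the norm computation
  have hd1 : (1 : ℂ) - q ^ (k + 1) ≠ 0 := one_sub_pow_ne hq (k + 1) (by omega)
  have hd2 : (1 : ℂ) - mu ^ 2 * q ^ (k + 1) ≠ 0 := fun h =>
    hmu (k + 1) (by omega) (by linear_combination -h)
  have hrec := cc_rec hq hmu k
  have hrec2 : cc q mu (k + 1) * ((1 - q ^ (k + 1)) * (1 - mu ^ 2 * q ^ (k + 1))) =
      cc q mu k * ((1 : ℂ) + mu ^ 2 * (q ^ 2) ^ k) := by rw [← pow_mul]; exact hrec
  have hnorm : ‖cc q mu (k + 1)‖ * (‖(1 : ℂ) - q ^ (k + 1)‖ * ‖(1 : ℂ) - mu ^ 2 * q ^ (k + 1)‖)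
      = ‖cc q mu k‖ * ‖(1 : ℂ) + mu ^ 2 * (q ^ 2) ^ k‖ := by
    simp only [← norm_mul]
    rw [hrec2]
  have hdpos : 0 < ‖(1 : ℂ) - q ^ (k + 1)‖ * ‖(1 : ℂ) - mu ^ 2 * q ^ (k + 1)‖ :=
    mul_pos (norm_pos_iff.2 hd1) (norm_pos_iff.2 hd2)
  have hcc1 : ‖cc q mu (k + 1)‖ = ‖cc q mu k‖ * ‖(1 : ℂ) + mu ^ 2 * (q ^ 2) ^ k‖ /
      (‖(1 : ℂ) - q ^ (k + 1)‖ * ‖(1 : ℂ) - mu ^ 2 * q ^ (k + 1)‖) :=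
    (eq_div_iff (ne_of_gt hdpos)).2 hnorm
  have key : ‖cc q mu (k + 1) * x ^ (k + 1)‖ =
      (‖x‖ * ‖(1 : ℂ) + mu ^ 2 * (q ^ 2) ^ k‖ /
        (‖(1 : ℂ) - q ^ (k + 1)‖ * ‖(1 : ℂ) - mu ^ 2 * q ^ (k + 1)‖)) * ‖cc q mu k * x ^ k‖ := by
    rw [norm_mul, norm_mul, norm_pow, norm_pow, hcc1, pow_succ]
    have : ‖x‖ = ‖x‖ := rfl
    rw [this]; ring
  rw [key]
  have h0 : (0 : ℝ) ≤ ‖cc q mu k * x ^ k‖ := norm_nonneg _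
  exact mul_le_mul_of_nonneg_right hk.le h0

lemma contiguous {q mu : ℂ} (hq : ‖q‖ < 1)
    (hmu : ∀ k : ℕ, 1 ≤ k → mu ^ 2 * q ^ k ≠ 1) {x : ℂ} (hx : ‖x‖ < 1) :
    (1 - x) * phi q mu x + mu ^ 2 * (1 - x) * phi q mu (q ^ 2 * x)
      = (1 + mu ^ 2) * phi q mu (q * x) := by
  have hqx : ‖q * x‖ < 1 := by
    rw [norm_mul]
    exact mul_lt_one_of_nonneg_of_lt_one_left (norm_nonneg q) hq hx.le
  have hq2x : ‖q ^ 2 * x‖ < 1 := by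
    rw [norm_mul, norm_pow]
    calc ‖q‖ ^ 2 * ‖x‖ ≤ 1 * ‖x‖ := by
          have : ‖q‖ ^ 2 ≤ 1 := by nlinarith [norm_nonneg q]
          exact mul_le_mul_of_nonneg_right this (norm_nonneg x)
      _ < 1 := by simpa using hx
  have S1 : Summable (fun k : ℕ => cc q mu k * x ^ k) := summable_cc hq hmu hx
  have S2 : Summable (fun k : ℕ => cc q mu k * (q * x) ^ k) := summable_cc hq hmu hqx
  have S3 : Summable (fun k : ℕ => cc q mu k * (q ^ 2 * x) ^ k) := summable_cc hq hmu hq2x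
  set g : ℕ → ℂ := fun k => cc q mu k * x ^ k - (1 + mu ^ 2) * (cc q mu k * (q * x) ^ k)
      + mu ^ 2 * (cc q mu k * (q ^ 2 * x) ^ k) with hgdef
  set h : ℕ → ℂ := fun k => x * (cc q mu k * x ^ k) + mu ^ 2 * x * (cc q mu k * (q ^ 2 * x) ^ k)
      with hhdef
  have Sg : Summable g := ((S1.sub (S2.mul_left _)).add (S3.mul_left _))
  have Sh : Summable h := ((S1.mul_left x).add (S3.mul_left _))
  have hTg : ∑' k, g k = (∑' k, cc q mu k * x ^ k)
      - (1 + mu ^ 2) * (∑' k, cc q mu k * (q * x) ^ k)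
      + mu ^ 2 * (∑' k, cc q mu k * (q ^ 2 * x) ^ k) := by
    rw [Summable.tsum_add (S1.sub (S2.mul_left _)) (S3.mul_left _), Summable.tsum_sub S1 (S2.mul_left _),
      tsum_mul_left, tsum_mul_left]
  have hTh : ∑' k, h k = x * (∑' k, cc q mu k * x ^ k)
      + mu ^ 2 * x * (∑' k, cc q mu k * (q ^ 2 * x) ^ k) := by
    rw [Summable.tsum_add (S1.mul_left x) (S3.mul_left _), tsum_mul_left, tsum_mul_left]
  have hgh : ∑' k, g k = ∑' k, h k := by
    rw [Summable.tsum_eq_zero_add Sg]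
    have hg0 : g 0 = 0 := by simp [hgdef]; ring
    rw [hg0, zero_add]
    refine tsum_congr fun k => ?_
    have hrec := cc_rec hq hmu k
    simp only [hgdef, hhdef]
    have e1 : (q * x) ^ (k + 1) = q ^ (k + 1) * x ^ (k + 1) := mul_pow q x (k + 1)
    have e2 : (q ^ 2 * x) ^ (k + 1) = q ^ (2 * (k + 1)) * x ^ (k + 1) := by
      rw [mul_pow, ← pow_mul]
    have e3 : (q ^ 2 * x) ^ k = q ^ (2 * k) * x ^ k := by rw [mul_pow, ← pow_mul]
    rw [e1, e2, e3]
    have e4 : q ^ (2 * (k + 1)) = q ^ (2 * k) * q ^ 2 := by rw [← pow_add]; ring_nf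
    rw [e4]
    linear_combination x ^ (k + 1) * hrec
  rw [phi_eq, phi_eq, phi_eq]
  linear_combination -hTg + hTh + hgh

noncomputable def sol (q mu : ℂ) (n : ℕ) : ℂ :=
  mu ^ (2 * n) * (1 + mu ^ 2) * qPoch q q n * phi q mu (q ^ (n + 2)) / (mu ^ 2 * (1 + mu ^ 2) ^ n)

lemma sol_rec {q mu : ℂ} (hq : ‖q‖ < 1) (hmu0 : mu ≠ 0) (hmu2 : 1 + mu ^ 2 ≠ 0)
    (hmu : ∀ k : ℕ, 1 ≤ k → mu ^ 2 * q ^ k ≠ 1) (n : ℕ) :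
    sol q mu (n + 2) = sol q mu (n + 1)
      - (mu / (1 + mu ^ 2)) ^ 2 * (1 - q ^ (n + 1)) * (1 - q ^ (n + 2)) * sol q mu n := by
  have hx : ‖q ^ (n + 2)‖ < 1 := by
    rw [norm_pow]; exact pow_lt_one₀ (norm_nonneg q) hq (by omega)
  have hc := contiguous hq hmu hx
  have e1 : q * q ^ (n + 2) = q ^ (n + 3) := by rw [← pow_succ']
  have e2 : q ^ 2 * q ^ (n + 2) = q ^ (n + 4) := by rw [← pow_add]; ring_nf
  rw [e1, e2] at hc
  unfold sol
  rw [show n + 2 = (n + 1) + 1 from rfl, qPoch_succ, qPoch_succ]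
  have hp : qPoch q q n ≠ 0 := qPochQ_ne hq n
  have hpow : (1 + mu ^ 2) ^ n ≠ 0 := pow_ne_zero _ hmu2
  field_simp
  linear_combination (mu ^ (2 * n + 2) * (1 + mu ^ 2) ^ (2 * n + 3)
    * (1 - q ^ (n + 1))) * hc
lemma seq_eq {α q : ℂ} (Z : ℕ → ℂ)
    (hZ : ∀ n : ℕ, Z (n + 2) = Z (n + 1) - α ^ 2 * (1 - q ^ (n + 1)) * (1 - q ^ (n + 2)) * Z n) :
    ∀ n, Z n = Z 0 * (Qseq α q n - Pseq α q n) + Z 1 * Pseq α q n := by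
  have key : ∀ n, (Z n = Z 0 * (Qseq α q n - Pseq α q n) + Z 1 * Pseq α q n) ∧
      (Z (n + 1) = Z 0 * (Qseq α q (n + 1) - Pseq α q (n + 1)) + Z 1 * Pseq α q (n + 1)) := by
    intro n
    induction n with
    | zero => constructor <;> simp [Pseq, Qseq]
    | succ n ih =>
      refine ⟨ih.2, ?_⟩
      rw [hZ n]
      simp only [Pseq, Qseq]
      linear_combination ih.2 - α ^ 2 * (1 - q ^ (n + 1)) * (1 - q ^ (n + 2)) * ih.1
  exact fun n => (key n).1

set_option maxHeartbeats 1000000 in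
theorem convergents_qTangent (q lam : ℂ) (hq : ‖q‖ < 1) (hlam : lam ≠ 0)
    (hlam2 : 1 + lam ^ 2 ≠ 0)
    (hk : ∀ k : ℕ, 1 ≤ k → lam ^ 2 * q ^ k ≠ 1 ∧ lam ^ 2 ≠ q ^ k)
    (w : ℕ) (A D : ℂ)
    (hA : A = (1 / lam) ^ w * phi q lam (q ^ 3) * phi q (1 / lam) (q ^ (w + 3))
        - lam ^ w * phi q (1 / lam) (q ^ 3) * phi q lam (q ^ (w + 3)))
    (hD : D = (1 + lam ^ 2) *
        ((1 / lam) ^ w * phi q lam (q ^ 2) * phi q (1 / lam) (q ^ (w + 3))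
          - lam ^ (w + 2) * phi q (1 / lam) (q ^ 2) * phi q lam (q ^ (w + 3))))
    (hQ : Qseq (lam / (1 + lam ^ 2)) q (w + 1) ≠ 0)
    (hD0 : D ≠ 0) (hDA : D ≠ lam ^ 2 * (1 - q) * A) :
    Pseq (lam / (1 + lam ^ 2)) q (w + 1) / Qseq (lam / (1 + lam ^ 2)) q (w + 1)
      = 1 / (1 - lam ^ 2 * (1 - q) * A / D) := by
  set α := lam / (1 + lam ^ 2) with hα
  have hmuL : ∀ k : ℕ, 1 ≤ k → lam ^ 2 * q ^ k ≠ 1 := fun k hk' => (hk k hk').1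
  have hinvne : (1 : ℂ) / lam ≠ 0 := one_div_ne_zero hlam
  have hinv2 : (1 : ℂ) + (1 / lam) ^ 2 ≠ 0 := by
    field_simp
    intro h
    exact hlam2 (by field_simp at h; linear_combination h)
  have hmuI : ∀ k : ℕ, 1 ≤ k → (1 / lam) ^ 2 * q ^ k ≠ 1 := by
    intro k hk' h
    apply (hk k hk').2
    field_simp at h
    linear_combination -h
  have hUrec : ∀ n : ℕ, sol q lam (n + 2) = sol q lam (n + 1)
      - α ^ 2 * (1 - q ^ (n + 1)) * (1 - q ^ (n + 2)) * sol q lam n := by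
    intro n
    exact sol_rec hq hlam hlam2 hmuL n
  have hlam2' : lam ^ 2 ≠ 0 := pow_ne_zero _ hlam
  have hpow1 : (1 : ℂ) + (1 / lam) ^ 2 = (1 + lam ^ 2) / lam ^ 2 := by
    rw [eq_div_iff hlam2']
    field_simp
    ring
  have hcoef : (1 / lam) / (1 + (1 / lam) ^ 2) = α := by
    rw [hα, hpow1, div_div_eq_mul_div]
    congr 1
    field_simp
  have hVrec : ∀ n : ℕ, sol q (1 / lam) (n + 2) = sol q (1 / lam) (n + 1)
      - α ^ 2 * (1 - q ^ (n + 1)) * (1 - q ^ (n + 2)) * sol q (1 / lam) n := by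
    intro n
    have := sol_rec hq hinvne hinv2 hmuI n
    rwa [hcoef] at this
  set U : ℕ → ℂ := sol q lam with hU
  set V : ℕ → ℂ := sol q (1 / lam) with hV
  set W0 : ℂ := U 0 * V 1 - V 0 * U 1 with hW0def
  have hE := seq_eq (α := α) (q := q) (fun n => U 0 * V n - V 0 * U n)
    (by intro n; rw [hUrec n, hVrec n]; ring) (w + 1)
  have hF := seq_eq (α := α) (q := q) (fun n => (V 1 - V 0) * U n + (U 0 - U 1) * V n)
    (by intro n; rw [hUrec n, hVrec n]; ring) (w + 1)
  have hEP : U 0 * V (w + 1) - V 0 * U (w + 1) = W0 * Pseq α q (w + 1) := by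
    rw [hW0def, hE]; ring
  have hFQ : (V 1 - V 0) * U (w + 1) + (U 0 - U 1) * V (w + 1) = W0 * Qseq α q (w + 1) := by
    rw [hW0def, hF]; ring
  -- explicit values of the solutions
  have e0 : qPoch q q 0 = 1 := by simp [qPoch]
  have e1 : qPoch q q 1 = 1 - q := by simp [qPoch]
  have ew1 : q ^ (w + 1 + 2) = q ^ (w + 3) := by congr 1
  have hpw : qPoch q q (w + 1) ≠ 0 := qPochQ_ne hq (w + 1)
  have hlw : lam ^ w ≠ 0 := pow_ne_zero _ hlam
  have hTw : (1 + lam ^ 2) ^ w ≠ 0 := pow_ne_zero _ hlam2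
  have hU0 : U 0 = (1 + lam ^ 2) * phi q lam (q ^ 2) / lam ^ 2 := by
    show sol q lam 0 = _
    unfold sol
    rw [e0]
    norm_num
  have hU1 : U 1 = (1 - q) * phi q lam (q ^ 3) := by
    show sol q lam 1 = _
    unfold sol
    rw [e1]
    norm_num
    try field_simp
    try ring
  have hV0 : V 0 = (1 + lam ^ 2) * phi q (1 / lam) (q ^ 2) := by
    show sol q (1 / lam) 0 = _
    unfold sol
    rw [e0, hpow1]
    norm_num
    try simp only [one_div, inv_pow, div_pow]
    try field_simp
    try ring
  have hV1 : V 1 = (1 - q) * phi q (1 / lam) (q ^ 3) := by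
    show sol q (1 / lam) 1 = _
    unfold sol
    rw [e1, hpow1]
    norm_num
    try simp only [one_div, inv_pow, div_pow]
    try field_simp
    try ring
  have hUw : U (w + 1) = lam ^ (2 * w) * qPoch q q (w + 1)
      * phi q lam (q ^ (w + 3)) / (1 + lam ^ 2) ^ w := by
    show sol q lam (w + 1) = _
    unfold sol
    rw [ew1]
    field_simp
    ring
  have hVw : V (w + 1) = qPoch q q (w + 1)
      * phi q (1 / lam) (q ^ (w + 3)) / (1 + lam ^ 2) ^ w := by
    show sol q (1 / lam) (w + 1) = _
    unfold sol
    rw [ew1, hpow1]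
    simp only [one_div, inv_pow, div_pow]
    field_simp
    ring
  have hpw : qPoch q q (w + 1) ≠ 0 := qPochQ_ne hq (w + 1)
  have hlw : lam ^ w ≠ 0 := pow_ne_zero _ hlam
  have hTw : (1 + lam ^ 2) ^ w ≠ 0 := pow_ne_zero _ hlam2
  set γ : ℂ := qPoch q q (w + 1) * lam ^ w / ((1 + lam ^ 2) ^ w * lam ^ 2) with hγdef
  have hγ : γ ≠ 0 := by
    rw [hγdef]
    exact div_ne_zero (mul_ne_zero hpw hlw) (mul_ne_zero hTw hlam2')
  have key1 : W0 * Pseq α q (w + 1) = γ * D := by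
    rw [← hEP]
    simp only [hU0, hU1, hV0, hV1, hUw, hVw, hpow1]
    rw [hD, hγdef]
    simp only [one_div, inv_pow]
    field_simp
    ring
  have key2 : W0 * Qseq α q (w + 1) = γ * (D - lam ^ 2 * (1 - q) * A) := by
    rw [← hFQ]
    simp only [hU0, hU1, hV0, hV1, hUw, hVw, hpow1]
    rw [hD, hA, hγdef]
    simp only [one_div, inv_pow]
    field_simp
    ring
  have hDX : D - lam ^ 2 * (1 - q) * A ≠ 0 := sub_ne_zero_of_ne hDA
  have hW0 : W0 ≠ 0 := by
    intro h
    rw [h, zero_mul] at key1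
    exact hD0 (by
      rcases mul_eq_zero.1 key1.symm with h' | h'
      · exact absurd h' hγ
      · exact h')
  have hstep : Pseq α q (w + 1) / Qseq α q (w + 1)
      = (W0 * Pseq α q (w + 1)) / (W0 * Qseq α q (w + 1)) := by
    rw [mul_div_mul_left _ _ hW0]
  rw [hstep, key1, key2, mul_div_mul_left _ _ hγ]
  have h1 : 1 - lam ^ 2 * (1 - q) * A / D = (D - lam ^ 2 * (1 - q) * A) / D := by
    rw [eq_div_iff hD0]
    rw [sub_mul, div_mul_cancel₀ _ hD0]
    ring
  rw [h1, one_div_div]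
end

section
/- Let x, y, q ∈ ℂ with |x| < 1, |y| < 1 and |q| ≤ 1. Then both series below converge absolutely and Σ_{n=0}^∞ x^n/(1 − y q^n) = Σ_{n=0}^∞ x^n y^n q^{n²} (1 − x y q^{2n}) / ((1 − x q^n)(1 − y q^n)). -/
open Complex

-- nonvanishing and norm lower bound
private lemma aux_lb {z q : ℂ} (hz : ‖z‖ < 1) (hq : ‖q‖ ≤ 1)
    (n : ℕ) : (1 : ℝ) - ‖z‖ ≤ ‖1 - z * q ^ n‖ := by
  have h1 : ‖z * q ^ n‖ ≤ ‖z‖ := by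
    rw [norm_mul, norm_pow]
    calc ‖z‖ * ‖q‖ ^ n ≤ ‖z‖ * 1 := by
          exact mul_le_mul_of_nonneg_left (pow_le_one₀ (norm_nonneg q) hq) (norm_nonneg z)
      _ = ‖z‖ := by simp
  calc (1:ℝ) - ‖z‖ ≤ 1 - ‖z * q ^ n‖ := by linarith
    _ = ‖(1:ℂ)‖ - ‖z * q ^ n‖ := by rw [norm_one]
    _ ≤ ‖1 - z * q ^ n‖ := norm_sub_norm_le _ _

private lemma aux_ne {z q : ℂ} (hz : ‖z‖ < 1) (hq : ‖q‖ ≤ 1)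
    (n : ℕ) : 1 - z * q ^ n ≠ 0 := by
  intro h
  have := aux_lb hz hq n
  rw [h] at this
  simp at this
  linarith

private lemma aux_r {z q : ℂ} (hz : ‖z‖ < 1) (hq : ‖q‖ ≤ 1)
    (n : ℕ) : ‖z * q ^ n‖ < 1 := by
  rw [norm_mul, norm_pow]
  calc ‖z‖ * ‖q‖ ^ n ≤ ‖z‖ * 1 :=
        mul_le_mul_of_nonneg_left (pow_le_one₀ (norm_nonneg q) hq) (norm_nonneg z)
    _ < 1 := by rw [mul_one]; exact hz

private lemma hasSum_range_comp {γ : Type*} (f : ℕ × ℕ → ℂ) (e : γ → ℕ × ℕ)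
    (he : Function.Injective e) {a : ℂ} (h : HasSum (f ∘ e) a) :
    HasSum (f ∘ ((↑) : Set.range e → ℕ × ℕ)) a := by
  have heq : (f ∘ ((↑) : Set.range e → ℕ × ℕ)) ∘ (Equiv.ofInjective e he) = f ∘ e := by
    funext z; simp
  exact ((Equiv.ofInjective e he).hasSum_iff).mp (heq ▸ h)

private noncomputable def fR (x y q : ℂ) : ℕ × ℕ → ℂ :=
  fun p => x ^ p.1 * y ^ p.2 * q ^ (p.1 * p.2)

private def e1 : ℕ → ℕ × ℕ := fun k => (k, k)
private def e2 : ℕ × ℕ → ℕ × ℕ := fun p => (p.1 + p.2 + 1, p.1)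
private def e3 : ℕ × ℕ → ℕ × ℕ := fun p => (p.1, p.1 + p.2 + 1)

private lemma inj1 : Function.Injective e1 := by
  intro a b h; simpa [e1, Prod.ext_iff] using h

private lemma inj2 : Function.Injective e2 := by
  intro ⟨a, b⟩ ⟨c, d⟩ h
  simp only [e2, Prod.ext_iff] at h
  simp [Prod.ext_iff]; omega

private lemma inj3 : Function.Injective e3 := by
  intro ⟨a, b⟩ ⟨c, d⟩ h
  simp only [e3, Prod.ext_iff] at h
  simp [Prod.ext_iff]; omega

private lemma r1 : Set.range e1 = {p : ℕ × ℕ | p.1 = p.2} := by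
  ext ⟨n, m⟩
  simp only [Set.mem_range, Set.mem_setOf_eq, e1, Prod.ext_iff]
  constructor
  · rintro ⟨k, h1, h2⟩; omega
  · intro h; exact ⟨n, rfl, h⟩

private lemma r2 : Set.range e2 = {p : ℕ × ℕ | p.2 < p.1} := by
  ext ⟨n, m⟩
  simp only [Set.mem_range, Set.mem_setOf_eq, e2, Prod.ext_iff]
  constructor
  · rintro ⟨⟨a, b⟩, h1, h2⟩; simp at h1 h2; omega
  · intro h; exact ⟨(m, n - m - 1), by simp; omega, by simp⟩

private lemma r3 : Set.range e3 = {p : ℕ × ℕ | p.1 < p.2} := by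
  ext ⟨n, m⟩
  simp only [Set.mem_range, Set.mem_setOf_eq, e3, Prod.ext_iff]
  constructor
  · rintro ⟨⟨a, b⟩, h1, h2⟩; simp at h1 h2; omega
  · intro h; exact ⟨(n, m - n - 1), by simp, by simp; omega⟩



/-!
STATEMENT 10 (Lemma: counting rectangles two ways):
`Σ_n x^n/(1-yq^n) = Σ_n x^n y^n q^{n²} (1-xyq^{2n}) / ((1-xq^n)(1-yq^n))`.
-/

theorem rectangle_identity (x y q : ℂ) (hx : ‖x‖ < 1)
    (hy : ‖y‖ < 1) (hq : ‖q‖ ≤ 1) :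
    (Summable fun n : ℕ => ‖x ^ n / (1 - y * q ^ n)‖) ∧
    (Summable fun n : ℕ =>
      ‖x ^ n * y ^ n * q ^ n ^ 2 * (1 - x * y * q ^ (2 * n)) /
        ((1 - x * q ^ n) * (1 - y * q ^ n))‖) ∧
    ∑' n : ℕ, x ^ n / (1 - y * q ^ n)
      = ∑' n : ℕ, x ^ n * y ^ n * q ^ n ^ 2 * (1 - x * y * q ^ (2 * n)) /
          ((1 - x * q ^ n) * (1 - y * q ^ n)) := by
  have hx' : ‖x‖ < 1 := hx
  have hy' : ‖y‖ < 1 := hy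
  have hq' : ‖q‖ ≤ 1 := hq
  have hx0 : (0:ℝ) ≤ ‖x‖ := norm_nonneg x
  have hy0 : (0:ℝ) ≤ ‖y‖ := norm_nonneg y
  -- Part 1 : summability of the LHS in norm
  have part1 : Summable fun n : ℕ => ‖x ^ n / (1 - y * q ^ n)‖ := by
    refine Summable.of_nonneg_of_le (fun n => norm_nonneg _) (fun n => ?_)
      (((summable_geometric_of_lt_one hx0 hx').mul_right ((1 - ‖y‖)⁻¹)))
    rw [norm_div, norm_pow, div_eq_mul_inv]
    have h1 : ‖1 - y * q ^ n‖⁻¹ ≤ (1 - ‖y‖)⁻¹ := by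
      apply inv_anti₀ (by linarith)
      exact aux_lb hy hq n
    exact mul_le_mul_of_nonneg_left h1 (by positivity)
  -- Part 2 : summability of the RHS in norm
  have hdenpos : (0:ℝ) < (1 - ‖x‖) * (1 - ‖y‖) := by
    apply mul_pos <;> linarith
  have part2 : Summable fun n : ℕ =>
      ‖x ^ n * y ^ n * q ^ n ^ 2 * (1 - x * y * q ^ (2 * n)) /
        ((1 - x * q ^ n) * (1 - y * q ^ n))‖ := by
    have hr : ‖x‖ * ‖y‖ < 1 := by nlinarith
    refine Summable.of_nonneg_of_le (fun n => norm_nonneg _) (fun n => ?_)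
      (((summable_geometric_of_lt_one (by positivity) hr).mul_right
        (2 / ((1 - ‖x‖) * (1 - ‖y‖)))))
    have hnum : ‖x ^ n * y ^ n * q ^ n ^ 2 * (1 - x * y * q ^ (2 * n))‖
        ≤ (‖x‖ * ‖y‖) ^ n * 2 := by
      have h1 : ‖q ^ (n ^ 2)‖ ≤ 1 := by
        rw [norm_pow]; exact pow_le_one₀ (norm_nonneg q) hq'
      have h2 : ‖1 - x * y * q ^ (2 * n)‖ ≤ 2 := by
        calc ‖1 - x * y * q ^ (2 * n)‖ ≤ ‖(1:ℂ)‖ + ‖x * y * q ^ (2 * n)‖ :=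
              norm_sub_le _ _
          _ ≤ 1 + 1 := by
              rw [norm_one, norm_mul, norm_mul, norm_pow]
              have hqn : ‖q‖ ^ (2 * n) ≤ 1 := pow_le_one₀ (norm_nonneg q) hq'
              have : ‖x‖ * ‖y‖ * ‖q‖ ^ (2 * n) ≤ 1 := by
                nlinarith [pow_nonneg (norm_nonneg q) (2 * n)]
              linarith
          _ = 2 := by norm_num
      calc ‖x ^ n * y ^ n * q ^ n ^ 2 * (1 - x * y * q ^ (2 * n))‖
          = ‖x‖ ^ n * ‖y‖ ^ n * ‖q ^ (n ^ 2)‖ * ‖1 - x * y * q ^ (2 * n)‖ := by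
            rw [norm_mul, norm_mul, norm_mul, norm_pow, norm_pow]
        _ ≤ ‖x‖ ^ n * ‖y‖ ^ n * 1 * 2 := by
            gcongr <;> positivity
        _ = (‖x‖ * ‖y‖) ^ n * 2 := by rw [mul_pow]; ring
    have hden : (1 - ‖x‖) * (1 - ‖y‖) ≤ ‖(1 - x * q ^ n) * (1 - y * q ^ n)‖ := by
      rw [norm_mul]
      exact mul_le_mul (aux_lb hx hq n) (aux_lb hy hq n) (by linarith) (norm_nonneg _)
    rw [norm_div]
    calc ‖x ^ n * y ^ n * q ^ n ^ 2 * (1 - x * y * q ^ (2 * n))‖ /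
          ‖(1 - x * q ^ n) * (1 - y * q ^ n)‖
        ≤ ((‖x‖ * ‖y‖) ^ n * 2) / ((1 - ‖x‖) * (1 - ‖y‖)) :=
          div_le_div₀ (by positivity) hnum hdenpos hden
      _ = (‖x‖ * ‖y‖) ^ n * (2 / ((1 - ‖x‖) * (1 - ‖y‖))) := by ring
  refine ⟨part1, part2, ?_⟩
  -- the double sum
  have hf : Summable (fR x y q) := by
    refine Summable.of_norm_bounded (g := fun p : ℕ × ℕ => ‖x‖ ^ p.1 * ‖y‖ ^ p.2)
      ((summable_geometric_of_lt_one hx0 hx').mul_of_nonneg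
        (summable_geometric_of_lt_one hy0 hy')
        (fun n => by positivity) (fun n => by positivity)) (fun p => ?_)
    simp only [fR, norm_mul, norm_pow]
    have h1 : ‖q‖ ^ (p.1 * p.2) ≤ 1 := pow_le_one₀ (norm_nonneg q) hq'
    calc ‖x‖ ^ p.1 * ‖y‖ ^ p.2 * ‖q‖ ^ (p.1 * p.2)
        ≤ ‖x‖ ^ p.1 * ‖y‖ ^ p.2 * 1 := by gcongr <;> positivity
      _ = ‖x‖ ^ p.1 * ‖y‖ ^ p.2 := by ring
  set T : ℂ := ∑' p : ℕ × ℕ, fR x y q p with hT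
  -- LHS equals T
  have hrow : ∀ n : ℕ, HasSum (fun m => fR x y q (n, m)) (x ^ n / (1 - y * q ^ n)) := by
    intro n
    have h := (hasSum_geometric_of_norm_lt_one (aux_r hy hq n)).mul_left (x ^ n)
    have heq : (fun m : ℕ => x ^ n * (y * q ^ n) ^ m) = fun m => fR x y q (n, m) := by
      funext m; simp only [fR]; ring
    rw [heq] at h
    rwa [div_eq_mul_inv]
  have hLHS : (∑' n : ℕ, x ^ n / (1 - y * q ^ n)) = T :=
    (hf.hasSum.prod_fiberwise hrow).tsum_eq
  -- the three pieces
  have hne_x := fun n => aux_ne hx hq n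
  have hne_y := fun n => aux_ne hy hq n
  set g : ℕ → ℂ := fun k => x ^ k * y ^ k * q ^ (k ^ 2) with hg_def
  set u : ℕ → ℂ := fun k => x ^ k * y ^ k * q ^ (k ^ 2) * (x * q ^ k) / (1 - x * q ^ k)
    with hu_def
  set l : ℕ → ℂ := fun k => x ^ k * y ^ k * q ^ (k ^ 2) * (y * q ^ k) / (1 - y * q ^ k)
    with hl_def
  set SD : ℂ := ∑' k : ℕ, fR x y q (e1 k) with hSD
  set SL : ℂ := ∑' p : ℕ × ℕ, fR x y q (e2 p) with hSL
  set SU : ℂ := ∑' p : ℕ × ℕ, fR x y q (e3 p) with hSU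
  have hsum1 : Summable (fR x y q ∘ e1) := hf.comp_injective inj1
  have hsum2 : Summable (fR x y q ∘ e2) := hf.comp_injective inj2
  have hsum3 : Summable (fR x y q ∘ e3) := hf.comp_injective inj3
  -- HasSum for diagonal term
  have hgD : HasSum g SD := by
    have : (fR x y q ∘ e1) = g := by
      funext k; simp only [fR, e1, Function.comp, g]
      rw [show k ^ 2 = k * k by ring]
    rw [← this]; exact hsum1.hasSum
  -- HasSum for lower part (p.2 < p.1)
  have huL : HasSum u SL := by
    refine HasSum.prod_fiberwise hsum2.hasSum (fun k => ?_)
    have h := (hasSum_geometric_of_norm_lt_one (aux_r hx hq k)).mul_left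
      (x ^ (k + 1) * y ^ k * q ^ (k * k + k))
    have heq : (fun j : ℕ => x ^ (k + 1) * y ^ k * q ^ (k * k + k) * (x * q ^ k) ^ j)
        = fun j => (fR x y q ∘ e2) (k, j) := by
      funext j; simp only [fR, e2, Function.comp]; ring
    rw [heq] at h
    have hval : x ^ (k + 1) * y ^ k * q ^ (k * k + k) * (1 - x * q ^ k)⁻¹ = u k := by
      simp only [u, div_eq_mul_inv]; ring
    rwa [hval] at h
  -- HasSum for upper part (p.1 < p.2)
  have hlU : HasSum l SU := by
    refine HasSum.prod_fiberwise hsum3.hasSum (fun k => ?_)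
    have h := (hasSum_geometric_of_norm_lt_one (aux_r hy hq k)).mul_left
      (x ^ k * y ^ (k + 1) * q ^ (k * k + k))
    have heq : (fun j : ℕ => x ^ k * y ^ (k + 1) * q ^ (k * k + k) * (y * q ^ k) ^ j)
        = fun j => (fR x y q ∘ e3) (k, j) := by
      funext j; simp only [fR, e3, Function.comp]; ring
    rw [heq] at h
    have hval : x ^ k * y ^ (k + 1) * q ^ (k * k + k) * (1 - y * q ^ k)⁻¹ = l k := by
      simp only [l, div_eq_mul_inv]; ring
    rwa [hval] at h
  -- assemble T = SD + SL + SU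
  have hD' : HasSum (fR x y q ∘ ((↑) : Set.range e1 → ℕ × ℕ)) SD :=
    hasSum_range_comp _ _ inj1 hsum1.hasSum
  have hL' : HasSum (fR x y q ∘ ((↑) : Set.range e2 → ℕ × ℕ)) SL :=
    hasSum_range_comp _ _ inj2 hsum2.hasSum
  have hU' : HasSum (fR x y q ∘ ((↑) : Set.range e3 → ℕ × ℕ)) SU :=
    hasSum_range_comp _ _ inj3 hsum3.hasSum
  have hdisj : Disjoint (Set.range e1) (Set.range e2) := by
    rw [r1, r2, Set.disjoint_left]
    rintro ⟨a, b⟩ h1 h2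
    simp only [Set.mem_setOf_eq] at h1 h2
    omega
  have hDL : HasSum (fR x y q ∘ ((↑) : ↥(Set.range e1 ∪ Set.range e2) → ℕ × ℕ)) (SD + SL) :=
    HasSum.add_disjoint hdisj hD' hL'
  have hcompl : (Set.range e1 ∪ Set.range e2)ᶜ = Set.range e3 := by
    rw [r1, r2, r3]
    ext ⟨a, b⟩
    simp; omega
  have htot : HasSum (fR x y q) (SD + SL + SU) := by
    refine HasSum.add_isCompl ?_ hDL hU'
    rw [← hcompl]
    exact isCompl_compl
  have hTval : T = SD + SL + SU := hf.hasSum.unique htot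
  -- per-term algebraic identity
  have hterm : ∀ k : ℕ, x ^ k * y ^ k * q ^ k ^ 2 * (1 - x * y * q ^ (2 * k)) /
      ((1 - x * q ^ k) * (1 - y * q ^ k)) = g k + u k + l k := by
    intro k
    simp only [hg_def, hu_def, hl_def]
    have h1 := hne_x k
    have h2 := hne_y k
    field_simp
    ring
  have hRHS : HasSum (fun k : ℕ => x ^ k * y ^ k * q ^ k ^ 2 * (1 - x * y * q ^ (2 * k)) /
      ((1 - x * q ^ k) * (1 - y * q ^ k))) (SD + SL + SU) := by
    have := (hgD.add huL).add hlU
    convert this using 1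
    funext k
    exact hterm k
  rw [hLHS, hTval, ← hRHS.tsum_eq]
end

section
/- Let q, λ ∈ ℂ with |q| < 1, λ ≠ 0, 1 + λ² ≠ 0, and λ²q^k ≠ 1 for all integers k ≥ 1. Define c_k = (−λ²q;q²)_k q^{2k} / ((q;q)_k (λ²q;q)_k) for k ≥ 0, and for each integer w ≥ −1 set S(w) = λ^w Σ_{k=0}^∞ c_k q^{kw} (this series converges absolutely). Then for every integer w ≥ 1: S(w) − ((1+λ²)/λ) S(w−1) + S(w−2) = q^{w+1} S(w) + q^w S(w−2). -/
/-- `c_k = (-λ²q;q²)_k q^{2k} / ((q;q)_k (λ²q;q)_k)`. -/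
noncomputable def cSec (q lam : ℂ) (k : ℕ) : ℂ :=
  qPoch (-(lam ^ 2 * q)) (q ^ 2) k * q ^ (2 * k) / (qPoch q q k * qPoch (lam ^ 2 * q) q k)

/-- `S(w) = λ^w Σ_{k=0}^∞ c_k q^{kw}`, for integer `w` (in particular `w ≥ -1`). -/
noncomputable def SSec (q lam : ℂ) (w : ℤ) : ℂ :=
  lam ^ w * ∑' k : ℕ, cSec q lam k * q ^ ((k : ℤ) * w)

section aux
variable {q lam : ℂ}

lemma fac1_ne (hq : ‖q‖ < 1) (j : ℕ) : 1 - q * q ^ j ≠ 0 := by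
  intro h
  have h1 : q * q ^ j = 1 := by linear_combination -h
  have : ‖q * q ^ j‖ < 1 := by
    rw [norm_mul, norm_pow]
    have hle : ‖q‖ ^ j ≤ 1 := pow_le_one₀ (by positivity) hq.le
    nlinarith [norm_nonneg q]
  rw [h1, norm_one] at this
  exact lt_irrefl 1 this

lemma fac2_ne (hk : ∀ k : ℕ, 1 ≤ k → lam ^ 2 * q ^ k ≠ 1) (j : ℕ) :
    1 - lam ^ 2 * q * q ^ j ≠ 0 := by
  intro h
  have h1 : lam ^ 2 * q ^ (j + 1) = 1 := by rw [pow_succ]; linear_combination -h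
  exact hk (j+1) (Nat.le_add_left 1 j) h1

lemma pochq_ne (hq : ‖q‖ < 1) (k : ℕ) : qPoch q q k ≠ 0 :=
  Finset.prod_ne_zero_iff.2 fun j _ => fac1_ne hq j

lemma pochl_ne (hk : ∀ k : ℕ, 1 ≤ k → lam ^ 2 * q ^ k ≠ 1) (k : ℕ) :
    qPoch (lam ^ 2 * q) q k ≠ 0 :=
  Finset.prod_ne_zero_iff.2 fun j _ => fac2_ne hk j

lemma cSec_rec (hq : ‖q‖ < 1) (hk : ∀ k : ℕ, 1 ≤ k → lam ^ 2 * q ^ k ≠ 1) (k : ℕ) :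
    cSec q lam (k+1) * ((1 - q * q ^ k) * (1 - lam ^ 2 * q * q ^ k))
      = cSec q lam k * (q ^ 2 * (1 + lam ^ 2 * q * (q ^ 2) ^ k)) := by
  unfold cSec qPoch
  rw [Finset.prod_range_succ, Finset.prod_range_succ, Finset.prod_range_succ]
  have h1 := fac1_ne hq k
  have h2 := fac2_ne hk k
  have h3 := pochq_ne hq k
  have h4 := pochl_ne hk k
  unfold qPoch at h3 h4
  field_simp
  ring
end aux

open Filter Topology

section aux2
variable {q lam : ℂ}

lemma cSec_step (hq : ‖q‖ < 1) (hk : ∀ k : ℕ, 1 ≤ k → lam ^ 2 * q ^ k ≠ 1)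
    (hq0 : q ≠ 0) (w : ℤ) (k : ℕ) :
    cSec q lam (k+1) * q ^ (((k:ℕ)+1 : ℤ) * w)
      = (cSec q lam k * q ^ ((k:ℤ) * w)) *
        (q ^ w * (q ^ 2 * (1 + lam ^ 2 * q * (q ^ 2) ^ k)
          / ((1 - q * q ^ k) * (1 - lam ^ 2 * q * q ^ k)))) := by
  have h1 := fac1_ne hq k
  have h2 := fac2_ne hk k
  have hz : q ^ (((k:ℕ)+1 : ℤ) * w) = q ^ ((k:ℤ) * w) * q ^ w := by
    rw [← zpow_add₀ hq0]; ring_nf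
  rw [hz]
  rw [mul_div_assoc', mul_div_assoc', eq_div_iff (mul_ne_zero h1 h2)]
  linear_combination (q ^ ((k:ℤ) * w) * q ^ w) * cSec_rec hq hk k

lemma summ_ne (hq : ‖q‖ < 1) (hk : ∀ k : ℕ, 1 ≤ k → lam ^ 2 * q ^ k ≠ 1)
    (hq0 : q ≠ 0) (w : ℤ) (hw : -1 ≤ w) :
    Summable fun k : ℕ => ‖cSec q lam k * q ^ ((k : ℤ) * w)‖ := by
  set r : ℝ := (1 + ‖q‖) / 2 with hr_def
  have habs : ‖q‖ = ‖q‖ := rfl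
  have hq0' : (0:ℝ) < ‖q‖ := by
    simpa using (norm_pos_iff.mpr hq0)
  have hr1 : r < 1 := by rw [hr_def]; linarith
  have hqr : ‖q‖ < r := by rw [hr_def]; linarith
  -- the ratio function
  set t : ℕ → ℝ := fun k => ‖q ^ w * (q ^ 2 * (1 + lam ^ 2 * q * (q ^ 2) ^ k)
      / ((1 - q * q ^ k) * (1 - lam ^ 2 * q * q ^ k)))‖ with ht_def
  have hlim : Tendsto t atTop (𝓝 (‖q ^ w * (q ^ 2 * (1 + lam ^ 2 * q * 0)
      / ((1 - q * 0) * (1 - lam ^ 2 * q * 0)))‖)) := by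
    apply Tendsto.norm
    apply Tendsto.mul tendsto_const_nhds
    have hp1 : Tendsto (fun k : ℕ => (q ^ 2) ^ k) atTop (𝓝 0) := by
      apply tendsto_pow_atTop_nhds_zero_of_norm_lt_one
      calc ‖q ^ 2‖ = ‖q‖ ^ 2 := by rw [norm_pow, habs]
        _ < 1 := by nlinarith
    have hp2 : Tendsto (fun k : ℕ => q ^ k) atTop (𝓝 0) := by
      apply tendsto_pow_atTop_nhds_zero_of_norm_lt_one
      rw [habs]; exact hq
    apply Tendsto.div
    · exact Tendsto.mul tendsto_const_nhds
        (Tendsto.add tendsto_const_nhds (Tendsto.mul tendsto_const_nhds hp1))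
    · exact Tendsto.mul
        (Tendsto.sub tendsto_const_nhds (Tendsto.mul tendsto_const_nhds hp2))
        (Tendsto.sub tendsto_const_nhds (Tendsto.mul tendsto_const_nhds hp2))
    · simp
  have hLval : ‖q ^ w * (q ^ 2 * (1 + lam ^ 2 * q * 0)
      / ((1 - q * 0) * (1 - lam ^ 2 * q * 0)))‖ = ‖q‖ ^ (w + 2) := by
    simp only [mul_zero, add_zero, sub_zero, one_mul, mul_one, div_one]
    rw [← zpow_natCast q 2, ← zpow_add₀ hq0, norm_zpow, habs]
    norm_num
  have hLlt : ‖q‖ ^ (w + 2) < r := by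
    have h1 : ‖q‖ ^ (w + 2) ≤ ‖q‖ ^ (1:ℤ) :=
      zpow_le_zpow_right_of_le_one₀ hq0' hq.le (by omega)
    simpa using lt_of_le_of_lt (by simpa using h1) hqr
  have hev : ∀ᶠ k in atTop, t k < r := by
    rw [hLval] at hlim
    exact hlim.eventually_lt_const hLlt
  apply summable_of_ratio_norm_eventually_le hr1
  filter_upwards [hev] with k hkr
  have hstep := cSec_step hq hk hq0 w k
  have : ‖cSec q lam (k+1) * q ^ (((k:ℕ)+1 : ℤ) * w)‖
      = ‖cSec q lam k * q ^ ((k:ℤ) * w)‖ * t k := by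
    rw [hstep, norm_mul]
  rw [Real.norm_of_nonneg (norm_nonneg _), Real.norm_of_nonneg (norm_nonneg _)]
  push_cast
  push_cast at this
  rw [this, mul_comm r _]
  exact mul_le_mul_of_nonneg_left hkr.le (norm_nonneg _)
end aux2

section main
variable {q lam : ℂ}

lemma cSec_zero_eq (lam : ℂ) (k : ℕ) (hk1 : k ≠ 0) : cSec 0 lam k = 0 := by
  simp [cSec, zero_pow (by omega : 2 * k ≠ 0)]

lemma summ_zero (lam : ℂ) (w : ℤ) :
    Summable fun k : ℕ => ‖cSec 0 lam k * (0:ℂ) ^ ((k : ℤ) * w)‖ := by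
  refine (summable_nat_add_iff 1).mp ?_
  have h : (fun n : ℕ => ‖cSec 0 lam (n+1) * (0:ℂ) ^ (((n+1 : ℕ) : ℤ) * w)‖)
      = fun _ => (0:ℝ) := by
    funext n
    rw [cSec_zero_eq lam (n+1) (by omega)]
    simp
  rw [h]
  exact summable_zero
end main

section main2
variable {q lam : ℂ}

lemma main_id (hq : ‖q‖ < 1) (hlam : lam ≠ 0)
    (hk : ∀ k : ℕ, 1 ≤ k → lam ^ 2 * q ^ k ≠ 1) (hq0 : q ≠ 0)
    (w : ℤ) (hw : 1 ≤ w) :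
    SSec q lam w - ((1 + lam ^ 2) / lam) * SSec q lam (w - 1) + SSec q lam (w - 2)
      = q ^ (w + 1) * SSec q lam w + q ^ w * SSec q lam (w - 2) := by
  set f1 : ℕ → ℂ := fun k => cSec q lam k * q ^ ((k : ℤ) * w) with hf1
  set f2 : ℕ → ℂ := fun k => cSec q lam k * q ^ ((k : ℤ) * (w - 1)) with hf2
  set f3 : ℕ → ℂ := fun k => cSec q lam k * q ^ ((k : ℤ) * (w - 2)) with hf3
  have hs1 : Summable f1 := Summable.of_norm (summ_ne hq hk hq0 w (by omega))
  have hs2 : Summable f2 := Summable.of_norm (summ_ne hq hk hq0 (w-1) (by omega))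
  have hs3 : Summable f3 := Summable.of_norm (summ_ne hq hk hq0 (w-2) (by omega))
  set S1 := ∑' k, f1 k with hS1
  set S2 := ∑' k, f2 k with hS2
  set S3 := ∑' k, f3 k with hS3
  have hc : HasSum
      (fun k => lam ^ 2 * f1 k - (1 + lam ^ 2) * f2 k + f3 k
        - lam ^ 2 * q ^ (w + 1) * f1 k - q ^ w * f3 k)
      (lam ^ 2 * S1 - (1 + lam ^ 2) * S2 + S3
        - lam ^ 2 * q ^ (w + 1) * S1 - q ^ w * S3) :=
    ((((hs1.hasSum.mul_left (lam ^ 2)).sub (hs2.hasSum.mul_left (1 + lam ^ 2))).add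
      hs3.hasSum).sub (hs1.hasSum.mul_left (lam ^ 2 * q ^ (w + 1)))).sub
      (hs3.hasSum.mul_left (q ^ w))
  set u : ℕ → ℂ := fun k => f3 k * ((1 - q ^ k) * (1 - lam ^ 2 * q ^ k)) with hu
  have haeq : ∀ k : ℕ,
      lam ^ 2 * f1 k - (1 + lam ^ 2) * f2 k + f3 k
        - lam ^ 2 * q ^ (w + 1) * f1 k - q ^ w * f3 k = u k - u (k + 1) := by
    intro k
    have e1 : q ^ ((k : ℤ) * w) = q ^ ((k : ℤ) * (w - 2)) * q ^ (2 * k) := by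
      rw [← zpow_natCast q (2 * k), ← zpow_add₀ hq0]
      congr 1; push_cast; ring
    have e2 : q ^ ((k : ℤ) * (w - 1)) = q ^ ((k : ℤ) * (w - 2)) * q ^ k := by
      rw [← zpow_natCast q k, ← zpow_add₀ hq0]
      congr 1; push_cast; ring
    have e3 : q ^ (((k : ℕ) + 1 : ℤ) * (w - 2))
        = q ^ ((k : ℤ) * (w - 2)) * q ^ (w - 2) := by
      rw [← zpow_add₀ hq0]; congr 1; ring
    have e4 : q ^ (w + 1) = q ^ (w - 2) * q ^ (3 : ℕ) := by
      rw [← zpow_natCast q 3, ← zpow_add₀ hq0]; congr 1; ring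
    have e5 : q ^ w = q ^ (w - 2) * q ^ (2 : ℕ) := by
      rw [← zpow_natCast q 2, ← zpow_add₀ hq0]; congr 1; ring
    simp only [hf1, hf2, hf3, hu]
    push_cast
    rw [e1, e2, e3, e4, e5]
    linear_combination (q ^ ((k : ℤ) * (w - 2)) * q ^ (w - 2)) * cSec_rec hq hk k
  have hulim : Filter.Tendsto u Filter.atTop (𝓝 0) := by
    have h3 : Filter.Tendsto f3 Filter.atTop (𝓝 0) := hs3.tendsto_atTop_zero
    have hp : Filter.Tendsto (fun k : ℕ => q ^ k) Filter.atTop (𝓝 0) :=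
      tendsto_pow_atTop_nhds_zero_of_norm_lt_one hq
    have hfac : Filter.Tendsto (fun k : ℕ => (1 - q ^ k) * (1 - lam ^ 2 * q ^ k))
        Filter.atTop (𝓝 (((1:ℂ) - 0) * (1 - lam ^ 2 * 0))) :=
      Filter.Tendsto.mul (tendsto_const_nhds.sub hp)
        (tendsto_const_nhds.sub (hp.const_mul (lam ^ 2)))
    have := h3.mul hfac
    simpa [hu] using this
  have htel : Filter.Tendsto
      (fun n => ∑ i ∈ Finset.range n,
        (lam ^ 2 * f1 i - (1 + lam ^ 2) * f2 i + f3 i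
          - lam ^ 2 * q ^ (w + 1) * f1 i - q ^ w * f3 i)) Filter.atTop (𝓝 0) := by
    have hsum : ∀ n : ℕ, ∑ i ∈ Finset.range n,
        (lam ^ 2 * f1 i - (1 + lam ^ 2) * f2 i + f3 i
          - lam ^ 2 * q ^ (w + 1) * f1 i - q ^ w * f3 i) = u 0 - u n := by
      intro n
      rw [Finset.sum_congr rfl fun i _ => haeq i, Finset.sum_range_sub' u n]
    have hu0 : u 0 = 0 := by simp [hu, hf3]
    simp only [hsum, hu0, zero_sub]
    simpa using hulim.neg
  have hV0 : lam ^ 2 * S1 - (1 + lam ^ 2) * S2 + S3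
      - lam ^ 2 * q ^ (w + 1) * S1 - q ^ w * S3 = 0 :=
    tendsto_nhds_unique hc.tendsto_sum_nat htel
  have el1 : lam ^ w = lam ^ (w - 2) * lam ^ (2 : ℕ) := by
    rw [← zpow_natCast lam 2, ← zpow_add₀ hlam]; congr 1; ring
  have el2 : lam ^ (w - 1) = lam ^ (w - 2) * lam := by
    rw [show w - 1 = (w - 2) + 1 by ring, zpow_add₀ hlam, zpow_one]
  have hdiv : ((1 + lam ^ 2) / lam) * (lam ^ (w - 1) * S2)
      = lam ^ (w - 2) * ((1 + lam ^ 2) * S2) := by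
    rw [el2]; field_simp
  show lam ^ w * S1 - ((1 + lam ^ 2) / lam) * (lam ^ (w - 1) * S2)
      + lam ^ (w - 2) * S3 = q ^ (w + 1) * (lam ^ w * S1) + q ^ w * (lam ^ (w - 2) * S3)
  rw [hdiv, el1]
  linear_combination lam ^ (w - 2) * hV0
end main2

theorem ansatz_qSecant (q lam : ℂ) (hq : ‖q‖ < 1) (hlam : lam ≠ 0)
    (hlam2 : 1 + lam ^ 2 ≠ 0)
    (hk : ∀ k : ℕ, 1 ≤ k → lam ^ 2 * q ^ k ≠ 1) :
    (∀ w : ℤ, -1 ≤ w → Summable fun k : ℕ => ‖cSec q lam k * q ^ ((k : ℤ) * w)‖) ∧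
    ∀ w : ℤ, 1 ≤ w →
      SSec q lam w - ((1 + lam ^ 2) / lam) * SSec q lam (w - 1) + SSec q lam (w - 2)
        = q ^ (w + 1) * SSec q lam w + q ^ w * SSec q lam (w - 2) := by
  constructor
  · intro w hw
    by_cases hq0 : q = 0
    · subst hq0; exact summ_zero lam w
    · exact summ_ne hq hk hq0 w hw
  · intro w hw
    by_cases hq0 : q = 0
    · subst hq0
      have hS : ∀ v : ℤ, SSec 0 lam v = lam ^ v := by
        intro v
        unfold SSec
        rw [tsum_eq_single (0 : ℕ) (fun k hk0 => by rw [cSec_zero_eq lam k hk0, zero_mul])]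
        simp [cSec, qPoch]
      rw [hS, hS, hS, zero_zpow _ (by omega : w + 1 ≠ 0), zero_zpow _ (by omega : w ≠ 0)]
      have el1 : lam ^ w = lam ^ (w - 2) * lam ^ (2 : ℕ) := by
        rw [← zpow_natCast lam 2, ← zpow_add₀ hlam]; congr 1; ring
      have el2 : lam ^ (w - 1) = lam ^ (w - 2) * lam := by
        rw [show w - 1 = (w - 2) + 1 by ring, zpow_add₀ hlam, zpow_one]
      rw [el1, el2]
      field_simp
      ring
    · exact main_id hq hlam hk hq0 w hw
end

section
/- Let x, q ∈ ℂ with |x| < 1, |q| < 1, x ≠ 0, x ≠ 1, and 1 + x q^k ≠ 0 for all integers k ≥ 0. Let S = Σ_{k=0}^∞ x^k/(1 + x q^k). Then Σ_{k=0}^∞ (1 − q^{k+1}) x^k / (1 + x q^{k+1}) = (x² S − S + 1) / (x² (x − 1)), all series converging absolutely. -/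
set_option maxHeartbeats 1000000


/-!
STATEMENT 13 (partial-fraction identity, q-tangent case):
`Σ_k (1-q^{k+1}) x^k / (1+xq^{k+1}) = (x²S - S + 1) / (x²(x-1))` where
`S = Σ_k x^k/(1+xq^k)`.
-/

theorem partialFractions_qTangent (x q : ℂ) (hx : ‖x‖ < 1)
    (hq : ‖q‖ < 1) (hx0 : x ≠ 0) (hx1 : x ≠ 1)
    (hden : ∀ k : ℕ, 1 + x * q ^ k ≠ 0) :
    (Summable fun k : ℕ => ‖x ^ k / (1 + x * q ^ k)‖) ∧
    (Summable fun k : ℕ => ‖(1 - q ^ (k + 1)) * x ^ k / (1 + x * q ^ (k + 1))‖) ∧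
    ∑' k : ℕ, (1 - q ^ (k + 1)) * x ^ k / (1 + x * q ^ (k + 1))
      = (x ^ 2 * (∑' k : ℕ, x ^ k / (1 + x * q ^ k))
          - (∑' k : ℕ, x ^ k / (1 + x * q ^ k)) + 1) / (x ^ 2 * (x - 1)) := by
  have hxnorm : ‖x‖ < 1 := by simpa using hx
  have hqnorm : ‖q‖ < 1 := by simpa using hq
  have hf : ∀ k : ℕ, 0 < ‖1 + x * q ^ k‖ := fun k => norm_pos_iff.mpr (hden k)
  -- the denominators are bounded away from 0
  have htend : Filter.Tendsto (fun k : ℕ => ‖1 + x * q ^ k‖) Filter.atTop (nhds 1) := by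
    have h1 : Filter.Tendsto (fun k : ℕ => q ^ k) Filter.atTop (nhds 0) :=
      tendsto_pow_atTop_nhds_zero_of_norm_lt_one hqnorm
    have h2 : Filter.Tendsto (fun k : ℕ => 1 + x * q ^ k) Filter.atTop (nhds (1 + x * 0)) :=
      tendsto_const_nhds.add (tendsto_const_nhds.mul h1)
    simpa using h2.norm
  obtain ⟨N, hN⟩ := Filter.eventually_atTop.mp
    (htend.eventually (eventually_gt_nhds (by norm_num : (1/2:ℝ) < 1)))
  set c : ℝ := min (1/2) ((Finset.range (N+1)).inf' ⟨0, by simp⟩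
    (fun k => ‖1 + x * q ^ k‖)) with hc
  have hc0 : 0 < c := lt_min (by norm_num) (by
    refine (Finset.lt_inf'_iff _).mpr ?_; intro i _; exact hf i)
  have hcle : ∀ k : ℕ, c ≤ ‖1 + x * q ^ k‖ := by
    intro k
    rcases le_or_gt k N with h | h
    · exact le_trans (min_le_right _ _)
        (Finset.inf'_le _ (Finset.mem_range.mpr (Nat.lt_succ_of_le h)))
    · exact le_trans (min_le_left _ _) (hN k h.le).le
  have hgeo : Summable fun k : ℕ => ‖x‖ ^ k :=
    summable_geometric_of_lt_one (norm_nonneg x) hxnorm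
  have hS1 : Summable fun k : ℕ => ‖x ^ k / (1 + x * q ^ k)‖ := by
    apply Summable.of_nonneg_of_le (fun k => norm_nonneg _) _ (hgeo.mul_left c⁻¹)
    intro k
    rw [norm_div, norm_pow]
    calc ‖x‖ ^ k / ‖1 + x * q ^ k‖ ≤ ‖x‖ ^ k / c :=
          div_le_div_of_nonneg_left (pow_nonneg (norm_nonneg x) k) hc0 (hcle k)
      _ = c⁻¹ * ‖x‖ ^ k := by rw [div_eq_inv_mul]
  have hS2 : Summable fun k : ℕ => ‖(1 - q ^ (k + 1)) * x ^ k / (1 + x * q ^ (k + 1))‖ := by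
    apply Summable.of_nonneg_of_le (fun k => norm_nonneg _) _ (hgeo.mul_left (2 * c⁻¹))
    intro k
    rw [norm_div, norm_mul, norm_pow]
    have h1 : ‖(1:ℂ) - q ^ (k+1)‖ ≤ 2 := by
      calc ‖(1:ℂ) - q ^ (k+1)‖ ≤ ‖(1:ℂ)‖ + ‖q ^ (k+1)‖ := norm_sub_le _ _
        _ ≤ 1 + 1 := by
            rw [norm_one, norm_pow]
            gcongr
            exact pow_le_one₀ (norm_nonneg q) hqnorm.le
        _ = 2 := by norm_num
    calc ‖(1:ℂ) - q ^ (k+1)‖ * ‖x‖ ^ k / ‖1 + x * q ^ (k+1)‖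
        ≤ 2 * ‖x‖ ^ k / c := by
          gcongr
          exact hcle (k+1)
      _ = 2 * c⁻¹ * ‖x‖ ^ k := by rw [div_eq_mul_inv]; ring
  refine ⟨hS1, hS2, ?_⟩
  -- summability of the complex series
  have hS : Summable fun k : ℕ => x ^ k / (1 + x * q ^ k) := Summable.of_norm hS1
  have hshift : Summable fun k : ℕ => x ^ (k+1) / (1 + x * q ^ (k+1)) :=
    (summable_nat_add_iff 1).mpr hS
  have hgeoC : Summable fun k : ℕ => x ^ k := summable_geometric_of_norm_lt_one hxnorm
  have h1x : (1 + x) ≠ 0 := by simpa using hden 0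
  have hx1' : (1 : ℂ) - x ≠ 0 := sub_ne_zero.mpr (fun h => hx1 h.symm)
  -- termwise partial fractions
  have hterm : ∀ k : ℕ, (1 - q ^ (k + 1)) * x ^ k / (1 + x * q ^ (k + 1))
      = (-(x⁻¹)) * x ^ k + ((x+1)/x^2) * (x ^ (k+1) / (1 + x * q ^ (k+1))) := by
    intro k
    have hd := hden (k+1)
    generalize q ^ (k+1) = y at hd ⊢
    have hd' : 1 + y * x ≠ 0 := by rw [mul_comm]; exact hd
    field_simp
    ring
  rw [tsum_congr hterm, Summable.tsum_add (hgeoC.mul_left _) (hshift.mul_left _),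
    tsum_mul_left, tsum_mul_left, tsum_geometric_of_norm_lt_one hxnorm]
  -- shift identity: ∑ x^k/(1+xq^k) = 1/(1+x) + ∑ x^(k+1)/(1+xq^(k+1))
  have hsplit : (∑' k : ℕ, x ^ k / (1 + x * q ^ k))
      = 1/(1+x) + ∑' k : ℕ, x ^ (k+1) / (1 + x * q ^ (k+1)) := by
    rw [Summable.tsum_eq_zero_add hS]
    norm_num
  have hST : (∑' k : ℕ, x ^ (k+1) / (1 + x * q ^ (k+1)))
      = (∑' k : ℕ, x ^ k / (1 + x * q ^ k)) - 1/(1+x) := by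
    rw [hsplit]; ring
  rw [hST]
  set S := ∑' k : ℕ, x ^ k / (1 + x * q ^ k)
  have hxm1 : x - 1 ≠ 0 := sub_ne_zero.mpr hx1
  field_simp
  ring
end

section
/- Let x, q ∈ ℂ with |x| < 1, |q| < 1, x ≠ 0, and 1 + x q^k ≠ 0 for all integers k ≥ 0. Let S = Σ_{k=0}^∞ x^k/(1 + x q^k). Then Σ_{k=0}^∞ (1 − q^{k+1}) x^k / ((1 + x q^k)(1 + x q^{k+1})) = ((q − x²) S − q) / (x² (q − 1)), all series converging absolutely. -/
/-!
STATEMENT 14 (partial-fraction identity, q-secant case):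
`Σ_k (1-q^{k+1}) x^k / ((1+xq^k)(1+xq^{k+1})) = ((q-x²)S - q) / (x²(q-1))` where
`S = Σ_k x^k/(1+xq^k)`.
-/

theorem partialFractions_qSecant (x q : ℂ) (hx : ‖x‖ < 1)
    (hq : ‖q‖ < 1) (hx0 : x ≠ 0)
    (hden : ∀ k : ℕ, 1 + x * q ^ k ≠ 0) :
    (Summable fun k : ℕ => ‖x ^ k / (1 + x * q ^ k)‖) ∧
    (Summable fun k : ℕ =>
      ‖(1 - q ^ (k + 1)) * x ^ k / ((1 + x * q ^ k) * (1 + x * q ^ (k + 1)))‖) ∧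
    ∑' k : ℕ, (1 - q ^ (k + 1)) * x ^ k / ((1 + x * q ^ k) * (1 + x * q ^ (k + 1)))
      = ((q - x ^ 2) * (∑' k : ℕ, x ^ k / (1 + x * q ^ k)) - q) /
          (x ^ 2 * (q - 1)) := by
  have hxn : ‖x‖ < 1 := hx
  have hqn' : ‖q‖ < 1 := hq
  have hq1 : q - 1 ≠ 0 := sub_ne_zero.mpr (by rintro rfl; simp at hq)
  have h1x : (1 : ℂ) + x ≠ 0 := by simpa using hden 0
  -- bound on the inverse denominators
  have hqn : Filter.Tendsto (fun k : ℕ => q ^ k) Filter.atTop (nhds 0) :=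
    tendsto_pow_atTop_nhds_zero_of_norm_lt_one hqn'
  have hden_t : Filter.Tendsto (fun k : ℕ => 1 + x * q ^ k) Filter.atTop (nhds 1) := by
    have := (hqn.const_mul x).const_add 1
    simpa using this
  have hg : Filter.Tendsto (fun k : ℕ => ‖(1 + x * q ^ k)⁻¹‖) Filter.atTop (nhds 1) := by
    have h := (hden_t.inv₀ one_ne_zero).norm
    simpa using h
  obtain ⟨C, hC⟩ := hg.bddAbove_range
  have key : ∀ k : ℕ, ‖(1 + x * q ^ k)⁻¹‖ ≤ C := fun k => hC ⟨k, rfl⟩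
  have hC0 : 0 ≤ C := le_trans (norm_nonneg _) (key 0)
  have hgeo : Summable (fun k : ℕ => ‖x‖ ^ k) :=
    summable_geometric_of_lt_one (norm_nonneg x) hxn
  -- Summability 1
  have S1 : Summable fun k : ℕ => ‖x ^ k / (1 + x * q ^ k)‖ := by
    apply Summable.of_nonneg_of_le (fun k => norm_nonneg _) _ (hgeo.mul_right C)
    intro k
    rw [div_eq_mul_inv, norm_mul, norm_pow]
    exact mul_le_mul_of_nonneg_left (key k) (pow_nonneg (norm_nonneg x) k)
  -- Summability 2
  have S2 : Summable fun k : ℕ =>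
      ‖(1 - q ^ (k + 1)) * x ^ k / ((1 + x * q ^ k) * (1 + x * q ^ (k + 1)))‖ := by
    apply Summable.of_nonneg_of_le (fun k => norm_nonneg _) _
      ((hgeo.mul_left 2).mul_right (C * C))
    intro k
    rw [div_eq_mul_inv, mul_inv, norm_mul, norm_mul, norm_mul, norm_pow]
    have h2 : ‖1 - q ^ (k + 1)‖ ≤ 2 := by
      calc ‖1 - q ^ (k + 1)‖ ≤ ‖(1 : ℂ)‖ + ‖q ^ (k + 1)‖ := norm_sub_le _ _
      _ ≤ 1 + 1 := by
          rw [norm_one, norm_pow]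
          gcongr
          exact pow_le_one₀ (norm_nonneg q) hqn'.le
      _ = 2 := by norm_num
    have hb : (0:ℝ) ≤ ‖x‖ ^ k := pow_nonneg (norm_nonneg x) k
    exact mul_le_mul (mul_le_mul h2 le_rfl hb (by norm_num))
      (mul_le_mul (key k) (key (k + 1)) (norm_nonneg _) hC0)
      (mul_nonneg (norm_nonneg _) (norm_nonneg _)) (by positivity)
  refine ⟨S1, S2, ?_⟩
  -- main computation
  set a : ℕ → ℂ := fun k => x ^ k / (1 + x * q ^ k) with ha
  have Sa : Summable a := S1.of_norm
  have Sa1 : Summable (fun k => a (k + 1)) := (summable_nat_add_iff 1).mpr Sa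
  set c1 : ℂ := -(q + x) / (x * (q - 1)) with hc1
  set c2 : ℂ := q * (x + 1) / (x ^ 2 * (q - 1)) with hc2
  have hpoint : ∀ k : ℕ,
      (1 - q ^ (k + 1)) * x ^ k / ((1 + x * q ^ k) * (1 + x * q ^ (k + 1)))
        = c1 * a k + c2 * a (k + 1) := by
    intro k
    have h1 := hden k
    have h2 := hden (k + 1)
    have hb1 : x * (q - 1) * (1 + x * q ^ k) ≠ 0 := mul_ne_zero (mul_ne_zero hx0 hq1) h1
    have hb2 : x ^ 2 * (q - 1) * (1 + x * q ^ (k + 1)) ≠ 0 :=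
      mul_ne_zero (mul_ne_zero (pow_ne_zero 2 hx0) hq1) h2
    simp only [ha, hc1, hc2]
    rw [div_mul_div_comm, div_mul_div_comm, div_add_div _ _ hb1 hb2,
      div_eq_div_iff (mul_ne_zero h1 h2) (mul_ne_zero hb1 hb2)]
    ring
  have hsplit : (∑' k, a (k + 1)) = (∑' k, a k) - a 0 := by
    have h := Summable.tsum_eq_zero_add Sa
    rw [h]; ring
  have ha0 : a 0 = 1 / (1 + x) := by simp [ha]
  calc ∑' k : ℕ, (1 - q ^ (k + 1)) * x ^ k / ((1 + x * q ^ k) * (1 + x * q ^ (k + 1)))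
      = ∑' k : ℕ, (c1 * a k + c2 * a (k + 1)) := tsum_congr hpoint
    _ = c1 * (∑' k, a k) + c2 * (∑' k, a (k + 1)) := by
        rw [Summable.tsum_add (Sa.mul_left c1) (Sa1.mul_left c2), tsum_mul_left, tsum_mul_left]
    _ = c1 * (∑' k, a k) + c2 * ((∑' k, a k) - 1 / (1 + x)) := by rw [hsplit, ha0]
    _ = ((q - x ^ 2) * (∑' k : ℕ, x ^ k / (1 + x * q ^ k)) - q) / (x ^ 2 * (q - 1)) := by
        simp only [ha, hc1, hc2]
        rw [eq_div_iff (mul_ne_zero (pow_ne_zero 2 hx0) hq1)]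
        field_simp [hx0, hq1, h1x]
        ring
end
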